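/- arXiv:1111.1797 — 2 statements merged into one kernel-verified Lean document; each statement's English description precedes it below -/
import Mathlib

section
/- Let 0 < y < μ₁ ≤ 1 with Δ' = μ₁ − y, and let T ≥ 1. For any integer j ≥ 4(ln T)/Δ'², let s(j) ~ Binomial(j, μ₁) and define X(j, s, y) as a geometric random variable (number of failures before first success) with success probability 1 − F^{beta}_{s+1, j−s+1}(y). Then E[min{E[X(j, s(j), y) | s(j)], T}] ≤ 16/T. -/
open MeasureTheory Real

noncomputable def binPMF (n : ℕ) (p : ℝ) (s : ℕ) : ℝ :=
  (n.choose s : ℝ) * p ^ s * (1 - p) ^ (n - s)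

noncomputable def binCDF (n : ℕ) (p : ℝ) (s : ℤ) : ℝ :=
  ∑ k ∈ Finset.range (s + 1).toNat, binPMF n p k

noncomputable def betaPDF (a b : ℕ) (x : ℝ) : ℝ :=
  if 0 < x ∧ x < 1 then
    (Real.Gamma (a + b) / (Real.Gamma a * Real.Gamma b)) * x ^ (a - 1) * (1 - x) ^ (b - 1)
  else 0

noncomputable def betaCDF (a b : ℕ) (y : ℝ) : ℝ :=
  ∫ x in Set.Iic y, betaPDF a b x

/-- Expected number of failures before the first success, where each trial succeeds
when an independent `Beta(s+1, j−s+1)` sample exceeds `y`; i.e. `E[X(j,s,y) | s]`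
for the geometric variable `X(j,s,y)` with success probability `1 − F^beta_{s+1,j−s+1}(y)`. -/
noncomputable def geomExp (j s : ℕ) (y : ℝ) : ℝ :=
  ∑' k : ℕ, (k : ℝ) * (betaCDF (s + 1) (j - s + 1) y) ^ k * (1 - betaCDF (s + 1) (j - s + 1) y)

/-! ### Auxiliary lemmas -/

lemma bernoulli_mgf_le (p : ℝ) (hp0 : 0 ≤ p) (hp1 : p ≤ 1) (t : ℝ) :
    1 - p + p * Real.exp t ≤ Real.exp (p * t + t ^ 2 / 8) := by
  have pos : ∀ x : ℝ, 0 < 1 - p + p * Real.exp x := by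
    intro x
    rcases eq_or_lt_of_le hp0 with h | h
    · simp [← h]
    · have : 0 < p * Real.exp x := mul_pos h (Real.exp_pos x)
      linarith [sub_nonneg.mpr hp1]
  set g : ℝ → ℝ := fun x => p * x + x ^ 2 / 8 - Real.log (1 - p + p * Real.exp x) with hgdef
  set g' : ℝ → ℝ := fun x => p + x / 4 - p * Real.exp x / (1 - p + p * Real.exp x) with hg'def
  have hD : ∀ x : ℝ, HasDerivAt (fun y => 1 - p + p * Real.exp y) (p * Real.exp x) x := by
    intro x
    simpa using ((Real.hasDerivAt_exp x).const_mul p).const_add (1 - p)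
  have hg : ∀ x : ℝ, HasDerivAt g (g' x) x := by
    intro x
    have h1 : HasDerivAt (fun y : ℝ => p * y) p x := by
      simpa using (hasDerivAt_id x).const_mul p
    have h2 : HasDerivAt (fun y : ℝ => y ^ 2 / 8) (x / 4) x := by
      have : HasDerivAt (fun y : ℝ => y ^ 2 / 8) (((2 : ℕ) : ℝ) * x ^ (2 - 1) / 8) x := (hasDerivAt_pow 2 x).div_const 8
      convert this using 1
      ring
    have h3 : HasDerivAt (fun y => Real.log (1 - p + p * Real.exp y))
        (p * Real.exp x / (1 - p + p * Real.exp x)) x :=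
      (hD x).log (pos x).ne'
    exact (h1.add h2).sub h3
  have hg' : ∀ x : ℝ, HasDerivAt g'
      (1 / 4 - p * (1 - p) * Real.exp x / (1 - p + p * Real.exp x) ^ 2) x := by
    intro x
    have h1 : HasDerivAt (fun y : ℝ => p + y / 4) (1 / 4) x := by
      simpa using ((hasDerivAt_id x).div_const 4).const_add p
    have h2 : HasDerivAt (fun y => p * Real.exp y / (1 - p + p * Real.exp y))
        (p * (1 - p) * Real.exp x / (1 - p + p * Real.exp x) ^ 2) x := by
      have h : HasDerivAt (fun y => p * Real.exp y / (1 - p + p * Real.exp y)) ((p * Real.exp x * (1 - p + p * Real.exp x) - p * Real.exp x * (p * Real.exp x)) / (1 - p + p * Real.exp x) ^ 2) x := ((Real.hasDerivAt_exp x).const_mul p).fun_div (hD x) (pos x).ne'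
      convert h using 1
      congr 1
      ring
    exact h1.sub h2
  have h2nd : ∀ x : ℝ, 0 ≤ 1 / 4 - p * (1 - p) * Real.exp x / (1 - p + p * Real.exp x) ^ 2 := by
    intro x
    have hle : p * (1 - p) * Real.exp x / (1 - p + p * Real.exp x) ^ 2 ≤ 1 / 4 := by
      rw [div_le_iff₀ (pow_pos (pos x) 2)]
      nlinarith [sq_nonneg ((1 - p) - p * Real.exp x), Real.exp_pos x]
    linarith
  have hdiffg : Differentiable ℝ g := fun x => (hg x).differentiableAt
  have hmono : Monotone g' := by
    apply monotone_of_deriv_nonneg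
    · intro x; exact (hg' x).differentiableAt
    · intro x; rw [(hg' x).deriv]; exact h2nd x
  have hg'0 : g' 0 = 0 := by
    simp only [hg'def]
    rw [Real.exp_zero]
    norm_num
  have hg0 : g 0 = 0 := by
    simp only [hgdef]
    rw [Real.exp_zero]
    norm_num
  have hgt : 0 ≤ g t := by
    rcases le_total 0 t with ht | ht
    · have hm : MonotoneOn g (Set.Ici 0) := by
        apply monotoneOn_of_deriv_nonneg (convex_Ici 0) hdiffg.continuous.continuousOn
          hdiffg.differentiableOn
        intro x hx
        rw [(hg x).deriv]
        rw [interior_Ici] at hx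
        have h := hmono (le_of_lt hx)
        rw [hg'0] at h
        exact h
      have := hm Set.self_mem_Ici (Set.mem_Ici.mpr ht) ht
      rw [hg0] at this; exact this
    · have hm : AntitoneOn g (Set.Iic 0) := by
        apply antitoneOn_of_deriv_nonpos (convex_Iic 0) hdiffg.continuous.continuousOn
          hdiffg.differentiableOn
        intro x hx
        rw [(hg x).deriv]
        rw [interior_Iic] at hx
        have h := hmono (le_of_lt hx)
        rw [hg'0] at h
        exact h
      have := hm (Set.mem_Iic.mpr ht) Set.self_mem_Iic ht
      rw [hg0] at this; exact this
  have hlog : Real.log (1 - p + p * Real.exp t) ≤ p * t + t ^ 2 / 8 := by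
    simp only [hgdef] at hgt
    linarith
  exact (Real.log_le_iff_le_exp (pos t)).mp hlog

lemma binPMF_nonneg (n : ℕ) (p : ℝ) (hp0 : 0 ≤ p) (hp1 : p ≤ 1) (k : ℕ) :
    0 ≤ binPMF n p k := by
  unfold binPMF
  have h1 : (0:ℝ) ≤ 1 - p := by linarith
  positivity

lemma binPMF_mgf (n : ℕ) (p t : ℝ) :
    ∑ k ∈ Finset.range (n + 1), binPMF n p k * Real.exp (t * k)
      = (p * Real.exp t + (1 - p)) ^ n := by
  rw [add_pow]
  refine Finset.sum_congr rfl fun k _ => ?_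
  unfold binPMF
  have h : Real.exp (t * k) = Real.exp t ^ k := by rw [mul_comm, Real.exp_nat_mul]
  rw [h, mul_pow]
  ring

lemma binPMF_sum (n : ℕ) (p : ℝ) :
    ∑ k ∈ Finset.range (n + 1), binPMF n p k = 1 := by
  have := binPMF_mgf n p 0
  simpa using this

lemma chernoff_high (n : ℕ) (hn : 0 < n) (p c : ℝ) (hp0 : 0 ≤ p) (hp1 : p ≤ 1)
    (hc : p * n ≤ c) :
    ∑ k ∈ Finset.filter (fun k : ℕ => c ≤ (k : ℝ)) (Finset.range (n + 1)), binPMF n p k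
      ≤ Real.exp (-2 * (c - p * n) ^ 2 / n) := by
  have hnR : (0:ℝ) < n := by exact_mod_cast hn
  set t : ℝ := 4 * (c - p * n) / n with ht
  have ht0 : 0 ≤ t := div_nonneg (by linarith) hnR.le
  calc ∑ k ∈ Finset.filter (fun k : ℕ => c ≤ (k : ℝ)) (Finset.range (n + 1)), binPMF n p k
      ≤ ∑ k ∈ Finset.filter (fun k : ℕ => c ≤ (k : ℝ)) (Finset.range (n + 1)),
          binPMF n p k * Real.exp (t * ((k : ℝ) - c)) := by
        refine Finset.sum_le_sum fun k hk => ?_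
        have hkc : c ≤ (k : ℝ) := (Finset.mem_filter.mp hk).2
        refine le_mul_of_one_le_right (binPMF_nonneg n p hp0 hp1 k) ?_
        rw [← Real.exp_zero]
        exact Real.exp_le_exp.mpr (mul_nonneg ht0 (by linarith))
    _ ≤ ∑ k ∈ Finset.range (n + 1), binPMF n p k * Real.exp (t * ((k : ℝ) - c)) := by
        refine Finset.sum_le_sum_of_subset_of_nonneg (Finset.filter_subset _ _) fun k _ _ =>
          mul_nonneg (binPMF_nonneg n p hp0 hp1 k) (Real.exp_pos _).le
    _ = Real.exp (-(t * c)) * ∑ k ∈ Finset.range (n + 1), binPMF n p k * Real.exp (t * k) := by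
        rw [Finset.mul_sum]
        refine Finset.sum_congr rfl fun k _ => ?_
        rw [← mul_assoc, mul_comm (Real.exp (-(t * c))) (binPMF n p k), mul_assoc,
          ← Real.exp_add]
        congr 2
        ring
    _ = Real.exp (-(t * c)) * (p * Real.exp t + (1 - p)) ^ n := by rw [binPMF_mgf]
    _ ≤ Real.exp (-(t * c)) * Real.exp (p * t + t ^ 2 / 8) ^ n := by
        refine mul_le_mul_of_nonneg_left (pow_le_pow_left₀ ?_ ?_ n) (Real.exp_pos _).le
        · have : (0:ℝ) ≤ 1 - p := by linarith
          positivity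
        · have := bernoulli_mgf_le p hp0 hp1 t
          linarith
    _ = Real.exp (-(t * c) + n * (p * t + t ^ 2 / 8)) := by
        rw [← Real.exp_nat_mul, ← Real.exp_add]
    _ = Real.exp (-2 * (c - p * n) ^ 2 / n) := by
        congr 1
        rw [ht]
        field_simp
        ring

lemma chernoff_low (n : ℕ) (hn : 0 < n) (p c : ℝ) (hp0 : 0 ≤ p) (hp1 : p ≤ 1)
    (hc : c ≤ p * n) :
    ∑ k ∈ Finset.filter (fun k : ℕ => (k : ℝ) ≤ c) (Finset.range (n + 1)), binPMF n p k
      ≤ Real.exp (-2 * (p * n - c) ^ 2 / n) := by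
  have hnR : (0:ℝ) < n := by exact_mod_cast hn
  set t : ℝ := -(4 * (p * n - c) / n) with ht
  have ht0 : t ≤ 0 := neg_nonpos_of_nonneg (div_nonneg (by linarith) hnR.le)
  calc ∑ k ∈ Finset.filter (fun k : ℕ => (k : ℝ) ≤ c) (Finset.range (n + 1)), binPMF n p k
      ≤ ∑ k ∈ Finset.filter (fun k : ℕ => (k : ℝ) ≤ c) (Finset.range (n + 1)),
          binPMF n p k * Real.exp (t * ((k : ℝ) - c)) := by
        refine Finset.sum_le_sum fun k hk => ?_
        have hkc : (k : ℝ) ≤ c := (Finset.mem_filter.mp hk).2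
        refine le_mul_of_one_le_right (binPMF_nonneg n p hp0 hp1 k) ?_
        rw [← Real.exp_zero]
        exact Real.exp_le_exp.mpr (by nlinarith)
    _ ≤ ∑ k ∈ Finset.range (n + 1), binPMF n p k * Real.exp (t * ((k : ℝ) - c)) := by
        refine Finset.sum_le_sum_of_subset_of_nonneg (Finset.filter_subset _ _) fun k _ _ =>
          mul_nonneg (binPMF_nonneg n p hp0 hp1 k) (Real.exp_pos _).le
    _ = Real.exp (-(t * c)) * ∑ k ∈ Finset.range (n + 1), binPMF n p k * Real.exp (t * k) := by
        rw [Finset.mul_sum]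
        refine Finset.sum_congr rfl fun k _ => ?_
        rw [← mul_assoc, mul_comm (Real.exp (-(t * c))) (binPMF n p k), mul_assoc,
          ← Real.exp_add]
        congr 2
        ring
    _ = Real.exp (-(t * c)) * (p * Real.exp t + (1 - p)) ^ n := by rw [binPMF_mgf]
    _ ≤ Real.exp (-(t * c)) * Real.exp (p * t + t ^ 2 / 8) ^ n := by
        refine mul_le_mul_of_nonneg_left (pow_le_pow_left₀ ?_ ?_ n) (Real.exp_pos _).le
        · have : (0:ℝ) ≤ 1 - p := by linarith
          positivity
        · have := bernoulli_mgf_le p hp0 hp1 t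
          linarith
    _ = Real.exp (-(t * c) + n * (p * t + t ^ 2 / 8)) := by
        rw [← Real.exp_nat_mul, ← Real.exp_add]
    _ = Real.exp (-2 * (p * n - c) ^ 2 / n) := by
        congr 1
        rw [ht]
        field_simp
        ring

lemma betaCDF_eq_tail (j s : ℕ) (hs : s ≤ j) (y : ℝ) (hy0 : 0 < y) (hy1 : y < 1) :
    betaCDF (s + 1) (j - s + 1) y
      = ∑ k ∈ Finset.Icc (s + 1) (j + 1), binPMF (j + 1) y k := by
  set m : ℕ := j + 1 with hm
  -- the polynomial equal to the pdf on (0,1)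
  set poly : ℝ → ℝ := fun x => (m.choose (s + 1) : ℝ) * (s + 1) * x ^ s * (1 - x) ^ (j - s)
    with hpoly
  -- antiderivative
  set G : ℝ → ℝ := fun x => ∑ k ∈ Finset.Icc (s + 1) m, (m.choose k : ℝ) * x ^ k *
    (1 - x) ^ (m - k) with hG
  -- pdf equals poly on (0,1)
  have hpdf : ∀ x : ℝ, 0 < x → x < 1 → betaPDF (s + 1) (j - s + 1) x = poly x := by
    intro x hx0 hx1
    unfold betaPDF
    rw [if_pos ⟨hx0, hx1⟩]
    have e1 : ((s + 1 : ℕ) : ℝ) = (s : ℝ) + 1 := by push_cast; ring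
    have e2 : (s + 1) + (j - s + 1) = (j + 1) + 1 := by omega
    have g1 : Real.Gamma ((s + 1 : ℕ) + (j - s + 1 : ℕ) : ℕ) = ((j + 1).factorial : ℝ) := by
      rw [e2]
      push_cast
      exact_mod_cast Real.Gamma_nat_eq_factorial (j + 1)
    have g2 : Real.Gamma ((s + 1 : ℕ) : ℝ) = (s.factorial : ℝ) := by
      push_cast
      exact_mod_cast Real.Gamma_nat_eq_factorial s
    have g3 : Real.Gamma ((j - s + 1 : ℕ) : ℝ) = ((j - s).factorial : ℝ) := by
      push_cast
      exact_mod_cast Real.Gamma_nat_eq_factorial (j - s)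
    have hc : ((j + 1).factorial : ℝ) = (m.choose (s + 1) : ℝ) * (s + 1) *
        (s.factorial : ℝ) * ((j - s).factorial : ℝ) := by
      have h := Nat.choose_mul_factorial_mul_factorial (show s + 1 ≤ m by omega)
      have hms : m - (s + 1) = j - s := by omega
      rw [hms] at h
      have : ((j+1).factorial : ℝ) = ((m.choose (s+1)) * (s+1).factorial * (j-s).factorial : ℕ) := by
        exact_mod_cast congrArg (Nat.cast : ℕ → ℝ) h.symm
      rw [this]
      push_cast [Nat.factorial_succ]
      ring
    have hfact_pos1 : (0:ℝ) < (s.factorial : ℝ) := by exact_mod_cast s.factorial_pos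
    have hfact_pos2 : (0:ℝ) < ((j - s).factorial : ℝ) := by exact_mod_cast (j - s).factorial_pos
    have hexp1 : (s + 1) - 1 = s := by omega
    have hexp2 : (j - s + 1) - 1 = j - s := by omega
    rw [hexp1, hexp2]
    push_cast at g1 g2 g3 ⊢
    rw [g1, g2, g3]
    rw [hpoly]
    have hratio : ((j + 1).factorial : ℝ) / ((s.factorial : ℝ) * ((j - s).factorial : ℝ))
        = (m.choose (s + 1) : ℝ) * ((s : ℝ) + 1) := by
      rw [div_eq_iff (by positivity)]
      push_cast at hc
      linarith
    rw [hratio]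
  -- derivative of G
  have hderiv : ∀ x : ℝ, HasDerivAt G (poly x) x := by
    intro x
    set A : ℕ → ℝ := fun k => (m.choose k : ℝ) * k * x ^ (k - 1) * (1 - x) ^ (m - k) with hA
    have hterm : ∀ k ∈ Finset.Icc (s + 1) m,
        HasDerivAt (fun x : ℝ => (m.choose k : ℝ) * x ^ k * (1 - x) ^ (m - k))
          (A k - A (k + 1)) x := by
      intro k hk
      obtain ⟨hk1, hk2⟩ := Finset.mem_Icc.mp hk
      have h1 : HasDerivAt (fun x : ℝ => x ^ k) ((k : ℝ) * x ^ (k - 1)) x := hasDerivAt_pow k x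
      have hsub : HasDerivAt (fun x : ℝ => 1 - x) (-1) x := by
        simpa using (hasDerivAt_id x).const_sub 1
      have h2 : HasDerivAt (fun x : ℝ => (1 - x) ^ (m - k))
          (((m - k : ℕ) : ℝ) * (1 - x) ^ (m - k - 1) * (-1)) x :=
        HasDerivAt.comp x (hasDerivAt_pow (m - k) (1 - x)) hsub
      have h3 : HasDerivAt (fun y : ℝ => (m.choose k : ℝ) * (y ^ k * (1 - y) ^ (m - k))) ((m.choose k : ℝ) * ((k : ℝ) * x ^ (k - 1) * (1 - x) ^ (m - k) + x ^ k * (((m - k : ℕ) : ℝ) * (1 - x) ^ (m - k - 1) * (-1)))) x := ((h1.fun_mul h2).const_mul (m.choose k : ℝ))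
      rw [show (fun y : ℝ => (m.choose k : ℝ) * (y ^ k * (1 - y) ^ (m - k)))
        = (fun y : ℝ => (m.choose k : ℝ) * y ^ k * (1 - y) ^ (m - k)) from by
          funext z; ring] at h3
      convert h3 using 1
      rw [hA]
      have hch : ((m.choose (k + 1)) : ℝ) * ((k : ℝ) + 1) = (m.choose k : ℝ) * ((m - k : ℕ) : ℝ) := by
        exact_mod_cast congrArg (Nat.cast : ℕ → ℝ) (Nat.choose_succ_right_eq m k)
      have hk1' : k + 1 - 1 = k := by omega
      have hmk : m - (k + 1) = m - k - 1 := by omega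
      simp only [hk1', hmk]
      push_cast
      linear_combination (-(x ^ k) * (1 - x) ^ (m - k - 1)) * hch
    have hsum := HasDerivAt.fun_sum hterm
    have htel : ∑ k ∈ Finset.Icc (s + 1) m, (A k - A (k + 1)) = A (s + 1) := by
      rw [← Finset.Ico_add_one_right_eq_Icc, Finset.sum_Ico_eq_sum_range]
      have hcount : m + 1 - (s + 1) = j + 1 - s := by omega
      rw [hcount]
      have htel2 : ∑ k ∈ Finset.range (j + 1 - s), (A (s + 1 + k) - A (s + 1 + k + 1))
          = A (s + 1 + 0) - A (s + 1 + (j + 1 - s)) :=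
        Finset.sum_range_sub' (fun i => A (s + 1 + i)) (j + 1 - s)
      rw [htel2]
      have hend : s + 1 + (j + 1 - s) = j + 2 := by omega
      rw [hend]
      have hstart : s + 1 + 0 = s + 1 := by omega
      rw [hstart]
      have hAend : A (j + 2) = 0 := by
        rw [hA]
        simp [Nat.choose_eq_zero_of_lt (show m < j + 2 by omega)]
      rw [hAend, sub_zero]
    rw [htel] at hsum
    have hAs : A (s + 1) = poly x := by
      rw [hA, hpoly]
      simp only [hm, Nat.succ_sub_succ, Nat.sub_zero, Nat.add_sub_cancel, Nat.add_sub_add_right]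
      push_cast
      ring
    rw [hAs] at hsum
    exact hsum
  -- integral computation
  have hpcont : Continuous poly := by
    rw [hpoly]
    continuity
  have hftc : ∫ x in (0:ℝ)..y, poly x = G y - G 0 :=
    intervalIntegral.integral_eq_sub_of_hasDerivAt (fun x _ => hderiv x)
      (hpcont.intervalIntegrable 0 y)
  have hG0 : G 0 = 0 := by
    rw [hG]
    apply Finset.sum_eq_zero
    intro k hk
    have hk1 := (Finset.mem_Icc.mp hk).1
    simp [zero_pow (show k ≠ 0 by omega)]
  have hmeas : MeasurableSet (Set.Ioc (0:ℝ) y) := measurableSet_Ioc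
  have hzero_on : Set.EqOn (betaPDF (s + 1) (j - s + 1)) 0 (Set.Iic (0:ℝ)) := by
    intro x hx
    simp only [Set.mem_Iic] at hx
    simp only [betaPDF, Pi.zero_apply]
    rw [if_neg (by push_neg; intro h; linarith)]
  have hpoly_on : Set.EqOn (betaPDF (s + 1) (j - s + 1)) poly (Set.Ioc (0:ℝ) y) :=
    fun x hx => hpdf x hx.1 (lt_of_le_of_lt hx.2 hy1)
  have hint1 : IntegrableOn (betaPDF (s + 1) (j - s + 1)) (Set.Iic (0:ℝ)) := by
    rw [integrableOn_congr_fun hzero_on measurableSet_Iic]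
    exact integrableOn_zero
  have hint2 : IntegrableOn (betaPDF (s + 1) (j - s + 1)) (Set.Ioc (0:ℝ) y) := by
    rw [integrableOn_congr_fun hpoly_on hmeas]
    exact hpcont.integrableOn_Ioc
  have hkey : betaCDF (s + 1) (j - s + 1) y = G y := by
    unfold betaCDF
    rw [← Set.Iic_union_Ioc_eq_Iic hy0.le,
      setIntegral_union (Set.Iic_disjoint_Ioc le_rfl) hmeas hint1 hint2,
      setIntegral_congr_fun measurableSet_Iic hzero_on,
      setIntegral_congr_fun hmeas hpoly_on,
      ← intervalIntegral.integral_of_le hy0.le, hftc, hG0]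
    simp
  rw [hkey, hG]
  rfl

lemma geomExp_eq (j s : ℕ) (y F : ℝ) (hF : betaCDF (s + 1) (j - s + 1) y = F)
    (h0 : 0 ≤ F) (h1 : F < 1) : geomExp j s y = F / (1 - F) := by
  unfold geomExp
  rw [hF, tsum_mul_right, tsum_coe_mul_geometric_of_norm_lt_one
    (by rwa [Real.norm_eq_abs, abs_of_nonneg h0])]
  have h1' : (1 : ℝ) - F ≠ 0 := by linarith
  field_simp

set_option maxHeartbeats 2000000 in
theorem large_j_bound (y μ₁ Δ' : ℝ) (hy : 0 < y) (hyμ : y < μ₁) (hμ : μ₁ ≤ 1)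
    (hΔ : Δ' = μ₁ - y) (T : ℕ) (hT : 1 ≤ T) (j : ℕ)
    (hj : (j : ℝ) ≥ 4 * Real.log T / Δ' ^ 2) :
    ∑ s ∈ Finset.range (j + 1), binPMF j μ₁ s * min (geomExp j s y) (T : ℝ) ≤ 16 / T := by
  have hy1 : y < 1 := lt_of_lt_of_le hyμ hμ
  have hμ0 : 0 < μ₁ := lt_trans hy hyμ
  have hΔ0 : 0 < Δ' := by rw [hΔ]; linarith
  have hΔ1 : Δ' < 1 := by rw [hΔ]; linarith
  have hTR : (1 : ℝ) ≤ (T : ℝ) := by exact_mod_cast hT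
  have hT0 : (0 : ℝ) < (T : ℝ) := by linarith
  have hpm : ∀ s : ℕ, 0 ≤ binPMF j μ₁ s := binPMF_nonneg j μ₁ hμ0.le hμ
  have hsum1 : ∑ s ∈ Finset.range (j + 1), binPMF j μ₁ s = 1 := binPMF_sum j μ₁
  by_cases hT4 : (T : ℝ) ≤ 4
  · -- trivial case
    calc ∑ s ∈ Finset.range (j + 1), binPMF j μ₁ s * min (geomExp j s y) (T : ℝ)
        ≤ ∑ s ∈ Finset.range (j + 1), binPMF j μ₁ s * (T : ℝ) := by
          refine Finset.sum_le_sum fun s _ => ?_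
          exact mul_le_mul_of_nonneg_left (min_le_right _ _) (hpm s)
      _ = (T : ℝ) := by rw [← Finset.sum_mul, hsum1, one_mul]
      _ ≤ 16 / T := by
          rw [le_div_iff₀ hT0]
          nlinarith
  · push_neg at hT4
    have hT5 : (5 : ℝ) ≤ (T : ℝ) := by
      have : 5 ≤ T := by exact_mod_cast Nat.lt_of_not_le (fun h => by
        have : (T : ℝ) ≤ 4 := by exact_mod_cast Nat.le_of_lt_succ (Nat.lt_succ_of_le h)
        linarith)
      exact_mod_cast this
    have hlogT : 0 < Real.log T := Real.log_pos (by linarith)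
    have hjl : 4 * Real.log T ≤ Δ' ^ 2 * j := by
      rw [ge_iff_le, div_le_iff₀ (by positivity)] at hj
      linarith
    have hΔsq : Δ' ^ 2 ≤ 1 := by nlinarith
    have hjT : 4 * Real.log T ≤ (j : ℝ) := by
      nlinarith [hjl, mul_le_mul_of_nonneg_right hΔsq (Nat.cast_nonneg (α := ℝ) j)]
    have hj0 : 0 < j := by
      rcases Nat.eq_zero_or_pos j with h | h
      · exfalso; rw [h] at hjT; push_cast at hjT; linarith
      · exact h
    have hjR : (0 : ℝ) < (j : ℝ) := by exact_mod_cast hj0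
    set a : ℝ := y * j + Δ' * j / 2 with ha
    -- the tail bound for good s
    have htail : ∀ s : ℕ, s ∈ Finset.range (j + 1) → a ≤ (s : ℝ) →
        ∑ k ∈ Finset.Icc (s + 1) (j + 1), binPMF (j + 1) y k ≤ 2 / (T : ℝ) ^ 2 := by
      intro s hsr hsa
      rw [ha] at hsa
      have hsj : s ≤ j := Nat.lt_succ_iff.mp (Finset.mem_range.mp hsr)
      have hset : Finset.Icc (s + 1) (j + 1)
          = Finset.filter (fun k : ℕ => ((s : ℝ) + 1) ≤ (k : ℝ)) (Finset.range (j + 1 + 1)) := by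
        ext k
        simp only [Finset.mem_Icc, Finset.mem_filter, Finset.mem_range]
        constructor
        · intro ⟨h1, h2⟩
          refine ⟨by omega, ?_⟩
          have : ((s + 1 : ℕ) : ℝ) ≤ (k : ℝ) := by exact_mod_cast h1
          push_cast at this; linarith
        · intro ⟨h1, h2⟩
          have : ((s + 1 : ℕ) : ℝ) ≤ (k : ℝ) := by push_cast; linarith
          exact ⟨by exact_mod_cast this, by omega⟩
      have hcast : ((j + 1 : ℕ) : ℝ) = (j : ℝ) + 1 := by push_cast; ring
      have hc : y * ((j + 1 : ℕ) : ℝ) ≤ (s : ℝ) + 1 := by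
        rw [hcast]
        have h1 : 0 ≤ Δ' * j / 2 := by positivity
        nlinarith
      have hch := chernoff_high (j + 1) (by omega) y ((s : ℝ) + 1) hy.le hy1.le hc
      rw [hset]
      rw [hcast] at hch
      refine le_trans hch ?_
      have hjp : (0 : ℝ) < (j : ℝ) + 1 := by linarith
      have hd : Δ' * j / 2 ≤ (s : ℝ) + 1 - y * ((j : ℝ) + 1) := by nlinarith
      have hd0 : 0 ≤ Δ' * j / 2 := by positivity
      have hsq : (Δ' * j / 2) ^ 2 ≤ ((s : ℝ) + 1 - y * ((j : ℝ) + 1)) ^ 2 :=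
        pow_le_pow_left₀ hd0 hd 2
      have hmono : Real.exp (-2 * ((s : ℝ) + 1 - y * ((j : ℝ) + 1)) ^ 2 / ((j : ℝ) + 1))
          ≤ Real.exp (-2 * (Δ' * j / 2) ^ 2 / ((j : ℝ) + 1)) := by
        apply Real.exp_le_exp.mpr
        have h2 : (-2) * ((s : ℝ) + 1 - y * ((j : ℝ) + 1)) ^ 2 ≤ (-2) * (Δ' * j / 2) ^ 2 := by
          linarith [hsq]
        exact div_le_div_of_nonneg_right h2 hjp.le
      refine le_trans hmono ?_
      have hexp1 : 2 * Real.log T - 1 / 2 ≤ 2 * (Δ' * j / 2) ^ 2 / ((j : ℝ) + 1) := by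
        rw [le_div_iff₀ hjp]
        nlinarith [mul_le_mul_of_nonneg_right hjl (Nat.cast_nonneg (α := ℝ) j)]
      have hexp2 : Real.exp (-2 * (Δ' * j / 2) ^ 2 / ((j : ℝ) + 1))
          ≤ Real.exp (-(2 * Real.log T - 1 / 2)) := by
        apply Real.exp_le_exp.mpr
        rw [neg_mul, neg_div]
        linarith
      refine le_trans hexp2 ?_
      have he : Real.exp (-(2 * Real.log T - 1 / 2))
          = Real.exp (1 / 2) / ((T : ℝ) * (T : ℝ)) := by
        rw [show -(2 * Real.log T - 1 / 2) = 1 / 2 - (Real.log T + Real.log T) by ring,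
          Real.exp_sub, Real.exp_add, Real.exp_log hT0]
      rw [he]
      have hehalf : Real.exp (1 / 2) ≤ 2 := by
        nlinarith [Real.exp_one_lt_d9, Real.exp_pos (1/2 : ℝ),
          Real.exp_add (1/2 : ℝ) (1/2 : ℝ)]
      rw [show ((T : ℝ) ^ 2) = (T : ℝ) * (T : ℝ) by ring]
      exact div_le_div_of_nonneg_right hehalf (by positivity : (0:ℝ) ≤ (T:ℝ) * (T:ℝ))
    -- per-term bound on good terms
    have hgood : ∀ s ∈ Finset.filter (fun s : ℕ => a ≤ (s : ℝ)) (Finset.range (j + 1)),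
        min (geomExp j s y) (T : ℝ) ≤ 3 / (T : ℝ) ^ 2 := by
      intro s hs
      obtain ⟨hsr, hsa⟩ := Finset.mem_filter.mp hs
      have hsj : s ≤ j := Nat.lt_succ_iff.mp (Finset.mem_range.mp hsr)
      have ht := htail s hsr hsa
      have hF0 : 0 ≤ ∑ k ∈ Finset.Icc (s + 1) (j + 1), binPMF (j + 1) y k :=
        Finset.sum_nonneg fun k _ => binPMF_nonneg (j + 1) y hy.le hy1.le k
      have hTsq : (25 : ℝ) ≤ (T : ℝ) ^ 2 := by nlinarith
      have h25 : 2 / (T : ℝ) ^ 2 ≤ 2 / 25 := by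
        apply div_le_div_of_nonneg_left (by norm_num) (by norm_num) hTsq
      have hF25 : ∑ k ∈ Finset.Icc (s + 1) (j + 1), binPMF (j + 1) y k ≤ 2 / 25 :=
        le_trans ht h25
      have hF1 : ∑ k ∈ Finset.Icc (s + 1) (j + 1), binPMF (j + 1) y k < 1 := by linarith
      have hFT : (∑ k ∈ Finset.Icc (s + 1) (j + 1), binPMF (j + 1) y k) * (T : ℝ) ^ 2 ≤ 2 :=
        (le_div_iff₀ (by positivity)).mp ht
      have hgeq := geomExp_eq j s y _ (betaCDF_eq_tail j s hsj y hy hy1) hF0 hF1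
      refine le_trans (min_le_left _ _) ?_
      rw [hgeq]
      rw [div_le_div_iff₀ (by linarith) (by positivity)]
      linarith
    -- split into good and bad parts
    rw [← Finset.sum_filter_add_sum_filter_not (Finset.range (j + 1))
      (fun s : ℕ => a ≤ (s : ℝ))]
    have hgood_sum : ∑ s ∈ Finset.filter (fun s : ℕ => a ≤ (s : ℝ)) (Finset.range (j + 1)),
        binPMF j μ₁ s * min (geomExp j s y) (T : ℝ) ≤ 3 / (T : ℝ) ^ 2 := by
      calc ∑ s ∈ Finset.filter (fun s : ℕ => a ≤ (s : ℝ)) (Finset.range (j + 1)),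
            binPMF j μ₁ s * min (geomExp j s y) (T : ℝ)
          ≤ ∑ s ∈ Finset.filter (fun s : ℕ => a ≤ (s : ℝ)) (Finset.range (j + 1)),
            binPMF j μ₁ s * (3 / (T : ℝ) ^ 2) := by
            refine Finset.sum_le_sum fun s hs =>
              mul_le_mul_of_nonneg_left (hgood s hs) (hpm s)
        _ = (∑ s ∈ Finset.filter (fun s : ℕ => a ≤ (s : ℝ)) (Finset.range (j + 1)),
            binPMF j μ₁ s) * (3 / (T : ℝ) ^ 2) := by rw [← Finset.sum_mul]
        _ ≤ 1 * (3 / (T : ℝ) ^ 2) := by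
            refine mul_le_mul_of_nonneg_right ?_ (by positivity)
            rw [← hsum1]
            exact Finset.sum_le_sum_of_subset_of_nonneg (Finset.filter_subset _ _)
              fun k _ _ => hpm k
        _ = 3 / (T : ℝ) ^ 2 := one_mul _
    have hbad_sum : ∑ s ∈ Finset.filter (fun s : ℕ => ¬ a ≤ (s : ℝ)) (Finset.range (j + 1)),
        binPMF j μ₁ s * min (geomExp j s y) (T : ℝ) ≤ 1 / (T : ℝ) := by
      have hcher : ∑ s ∈ Finset.filter (fun s : ℕ => ¬ a ≤ (s : ℝ)) (Finset.range (j + 1)),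
          binPMF j μ₁ s ≤ Real.exp (-2 * (μ₁ * j - a) ^ 2 / j) := by
        refine le_trans ?_ (chernoff_low j hj0 μ₁ a hμ0.le hμ ?_)
        · refine Finset.sum_le_sum_of_subset_of_nonneg ?_ fun k _ _ => hpm k
          intro x hx
          obtain ⟨hx1, hx2⟩ := Finset.mem_filter.mp hx
          exact Finset.mem_filter.mpr ⟨hx1, le_of_lt (lt_of_not_ge hx2)⟩
        · rw [ha, hΔ]
          nlinarith
      have hexp : Real.exp (-2 * (μ₁ * j - a) ^ 2 / j) ≤ 1 / ((T : ℝ) * (T : ℝ)) := by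
        have he1 : μ₁ * j - a = Δ' * j / 2 := by rw [ha, hΔ]; ring
        rw [he1]
        have he2 : 2 * Real.log T ≤ 2 * (Δ' * j / 2) ^ 2 / j := by
          rw [le_div_iff₀ hjR]
          nlinarith [mul_le_mul_of_nonneg_right hjl (Nat.cast_nonneg (α := ℝ) j)]
        calc Real.exp (-2 * (Δ' * j / 2) ^ 2 / j) ≤ Real.exp (-(2 * Real.log T)) := by
              apply Real.exp_le_exp.mpr
              rw [neg_mul, neg_div]
              linarith
          _ = 1 / ((T : ℝ) * (T : ℝ)) := by
              rw [show -(2 * Real.log T) = 0 - (Real.log T + Real.log T) by ring,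
                Real.exp_sub, Real.exp_add, Real.exp_log hT0, Real.exp_zero]
      calc ∑ s ∈ Finset.filter (fun s : ℕ => ¬ a ≤ (s : ℝ)) (Finset.range (j + 1)),
            binPMF j μ₁ s * min (geomExp j s y) (T : ℝ)
          ≤ ∑ s ∈ Finset.filter (fun s : ℕ => ¬ a ≤ (s : ℝ)) (Finset.range (j + 1)),
            binPMF j μ₁ s * (T : ℝ) := by
            refine Finset.sum_le_sum fun s _ =>
              mul_le_mul_of_nonneg_left (min_le_right _ _) (hpm s)
        _ = (∑ s ∈ Finset.filter (fun s : ℕ => ¬ a ≤ (s : ℝ)) (Finset.range (j + 1)),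
            binPMF j μ₁ s) * (T : ℝ) := by rw [← Finset.sum_mul]
        _ ≤ 1 / ((T : ℝ) * (T : ℝ)) * (T : ℝ) := by
            refine mul_le_mul_of_nonneg_right (le_trans hcher hexp) hT0.le
        _ = 1 / (T : ℝ) := by field_simp
    have hfin : 3 / (T : ℝ) ^ 2 + 1 / (T : ℝ) ≤ 16 / (T : ℝ) := by
      rw [div_add_div _ _ (by positivity) (by positivity : ((T : ℝ)) ≠ 0),
        div_le_div_iff₀ (by positivity) hT0]
      nlinarith
    linarith [hgood_sum, hbad_sum, hfin]
end

section
/- Let 0 < y < μ₁ ≤ 1, Δ' = μ₁ − y, R = μ₁(1−y)/(y(1−μ₁)), and D the KL divergence between Bernoulli(y) and Bernoulli(μ₁). Let s(j) ~ Binomial(j, μ₁) and X(j,s,y) be geometric with success probability 1 − F^{beta}_{s+1,j−s+1}(y). Then for any nonnegative integer j < (y/D) ln R, E[E[min{X(j,s(j),y), T} | s(j)]] ≤ 1 + 2/(1−y) + (μ₁/Δ') e^{−Dj}. -/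
open MeasureTheory Real

/-- `E[min{X(j,s,y), T} | s]` where `X(j,s,y)` is geometric (number of failures before
the first success) with success probability `1 − F^beta_{s+1,j−s+1}(y)`. -/
noncomputable def geomExpMin (j s : ℕ) (y : ℝ) (T : ℕ) : ℝ :=
  ∑' k : ℕ, (min k T : ℝ) * (betaCDF (s + 1) (j - s + 1) y) ^ k *
    (1 - betaCDF (s + 1) (j - s + 1) y)


open Finset

noncomputable def Cns (n s : ℕ) : ℝ :=
  (n.factorial : ℝ) / (s.factorial * (n - 1 - s).factorial)

lemma Cns_pos (n s : ℕ) : 0 < Cns n s := by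
  unfold Cns; positivity

lemma binPMF_nonneg_s10 {p : ℝ} (h0 : 0 ≤ p) (h1 : p ≤ 1) (n s : ℕ) : 0 ≤ binPMF n p s := by
  have h2 : (0:ℝ) ≤ 1 - p := by linarith
  unfold binPMF
  positivity

lemma sum_binPMF (n : ℕ) (p : ℝ) : ∑ k ∈ range (n+1), binPMF n p k = 1 := by
  have h : ((p + (1-p)))^n = ∑ k ∈ range (n+1), p ^ k * (1-p) ^ (n - k) * ↑(n.choose k) :=
    add_pow p (1-p) n
  calc ∑ k ∈ range (n+1), binPMF n p k
      = ∑ k ∈ range (n+1), p ^ k * (1-p) ^ (n - k) * ↑(n.choose k) := by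
        apply Finset.sum_congr rfl; intro k _; unfold binPMF; ring
    _ = (p + (1-p))^n := h.symm
    _ = 1 := by norm_num

lemma binCDF_natCast (n : ℕ) (p : ℝ) (s : ℕ) :
    binCDF n p (s : ℤ) = ∑ k ∈ range (s+1), binPMF n p k := by
  simp [binCDF]

lemma betaPDF_nonneg (a b : ℕ) (x : ℝ) : 0 ≤ betaPDF a b x := by
  unfold betaPDF
  split
  · rename_i h
    have h1 : 0 ≤ Real.Gamma (a + b) := by
      rcases Nat.eq_zero_or_pos (a + b) with h0 | h0
      · rcases Nat.add_eq_zero.mp h0 with ⟨rfl, rfl⟩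
        norm_num [Real.Gamma_zero]
      · exact le_of_lt (Real.Gamma_pos_of_pos (by push_cast; exact_mod_cast h0))
    have h2 : 0 ≤ Real.Gamma a := by
      rcases Nat.eq_zero_or_pos a with rfl | h0
      · norm_num [Real.Gamma_zero]
      · exact le_of_lt (Real.Gamma_pos_of_pos (by exact_mod_cast h0))
    have h3 : 0 ≤ Real.Gamma b := by
      rcases Nat.eq_zero_or_pos b with rfl | h0
      · norm_num [Real.Gamma_zero]
      · exact le_of_lt (Real.Gamma_pos_of_pos (by exact_mod_cast h0))
    have := h.1; have := h.2
    have hx1 : (0:ℝ) ≤ 1 - x := by linarith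
    positivity
  · exact le_refl 0

lemma betaPDF_eq_indicator (n s : ℕ) (hs : s + 1 ≤ n) (x : ℝ) :
    betaPDF (s + 1) (n - s) x =
      Set.indicator (Set.Ioo (0:ℝ) 1) (fun t => Cns n s * t ^ s * (1 - t) ^ (n - 1 - s)) x := by
  unfold betaPDF
  rw [Set.indicator_apply]
  by_cases h : x ∈ Set.Ioo (0:ℝ) 1
  · rw [if_pos (by exact ⟨h.1, h.2⟩)]
    have hcast : ((s + 1 : ℕ) : ℝ) + ((n - s : ℕ) : ℝ) = (n : ℝ) + 1 := by
      have : s ≤ n := by omega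
      push_cast [this]; ring
    have hG1 : Real.Gamma ((s + 1 : ℕ) + ((n - s : ℕ) : ℝ)) = (n.factorial : ℝ) := by
      rw [hcast, Real.Gamma_nat_eq_factorial]
    have hG2 : Real.Gamma ((s + 1 : ℕ) : ℝ) = (s.factorial : ℝ) := by
      push_cast
      exact_mod_cast Real.Gamma_nat_eq_factorial s
    have hG3 : Real.Gamma ((n - s : ℕ) : ℝ) = ((n - 1 - s).factorial : ℝ) := by
      have h1 : (n - s : ℕ) = (n - 1 - s) + 1 := by omega
      rw [h1]
      push_cast
      exact_mod_cast Real.Gamma_nat_eq_factorial (n - 1 - s)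
    have he1 : (s + 1) - 1 = s := by omega
    have he2 : (n - s) - 1 = n - 1 - s := by omega
    rw [he1, he2, hG1, hG2, hG3, if_pos h]
    rfl
  · rw [if_neg (by simpa [Set.mem_Ioo] using h), if_neg h]

lemma betaPDF_integrable (a b : ℕ) : Integrable (betaPDF a b) := by
  have hmeas : Measurable (betaPDF a b) := by
    unfold betaPDF
    apply Measurable.ite
    · exact (measurableSet_lt measurable_const measurable_id).inter
        (measurableSet_lt measurable_id measurable_const)
    · fun_prop
    · exact measurable_const
  have hbound : ∀ x, ‖betaPDF a b x‖ ≤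
      Set.indicator (Set.Icc (0:ℝ) 1) (fun _ => |Real.Gamma (a + b) / (Real.Gamma a * Real.Gamma b)|) x := by
    intro x
    unfold betaPDF
    split
    · rename_i h
      rw [Set.indicator_of_mem (by constructor <;> [linarith [h.1]; linarith [h.2]])]
      rw [Real.norm_eq_abs, abs_mul, abs_mul]
      have h1 : |x ^ (a-1)| ≤ 1 := by
        rw [abs_pow]; apply pow_le_one₀ (abs_nonneg x); rw [abs_le]; constructor <;> linarith [h.1, h.2]
      have h2 : |(1-x) ^ (b-1)| ≤ 1 := by
        rw [abs_pow]; apply pow_le_one₀ (abs_nonneg _); rw [abs_le]; constructor <;> linarith [h.1, h.2]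
      calc |Real.Gamma (↑a + ↑b) / (Real.Gamma ↑a * Real.Gamma ↑b)| * |x ^ (a - 1)| * |(1 - x) ^ (b - 1)|
          ≤ |Real.Gamma (↑a + ↑b) / (Real.Gamma ↑a * Real.Gamma ↑b)| * 1 * 1 := by
            apply mul_le_mul (mul_le_mul le_rfl h1 (abs_nonneg _) (abs_nonneg _)) h2 (abs_nonneg _)
            positivity
        _ = |Real.Gamma (↑a + ↑b) / (Real.Gamma ↑a * Real.Gamma ↑b)| := by ring
    · simp only [norm_zero, Set.indicator_apply]
      split
      · positivity
      · exact le_refl 0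
  have hind : Integrable (Set.indicator (Set.Icc (0:ℝ) 1)
      (fun _ => |Real.Gamma (a + b) / (Real.Gamma a * Real.Gamma b)|)) := by
    rw [integrable_indicator_iff measurableSet_Icc]
    exact integrableOn_const (by simp)
  exact Integrable.mono' hind hmeas.aestronglyMeasurable (Filter.Eventually.of_forall hbound)

lemma betaCDF_mono (a b : ℕ) {y y' : ℝ} (h : y ≤ y') : betaCDF a b y ≤ betaCDF a b y' := by
  unfold betaCDF
  apply setIntegral_mono_set (betaPDF_integrable a b).integrableOn
  · exact Filter.Eventually.of_forall fun x => betaPDF_nonneg a b x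
  · exact Filter.Eventually.of_forall fun x (hx : x ≤ y) => le_trans hx h

lemma betaCDF_eq (n s : ℕ) (hs : s + 1 ≤ n) {y : ℝ} (hy0 : 0 ≤ y) (hy1 : y ≤ 1) :
    betaCDF (s + 1) (n - s) y = ∫ t in (0:ℝ)..y, Cns n s * t ^ s * (1 - t) ^ (n - 1 - s) := by
  unfold betaCDF
  have h1 : ∀ x, betaPDF (s+1) (n-s) x =
      Set.indicator (Set.Ioo (0:ℝ) 1) (fun t => Cns n s * t ^ s * (1 - t) ^ (n - 1 - s)) x :=
    betaPDF_eq_indicator n s hs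
  rw [show (fun x => betaPDF (s+1) (n-s) x) = _ from funext h1]
  rw [MeasureTheory.setIntegral_indicator measurableSet_Ioo]
  have hae : (Set.Iic y ∩ Set.Ioo 0 1 : Set ℝ) =ᵐ[volume] (Set.Ioc 0 y : Set ℝ) := by
    rw [MeasureTheory.ae_eq_set]
    constructor
    · apply measure_mono_null (_ : _ ⊆ (∅ : Set ℝ)) (OuterMeasureClass.measure_empty volume)
      rintro t ⟨⟨ht1, ht2, ht3⟩, ht4⟩
      exact ht4 ⟨ht2, ht1⟩
    · apply measure_mono_null (_ : _ ⊆ ({y} : Set ℝ)) (measure_singleton y)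
      rintro t ⟨⟨ht1, ht2⟩, ht3⟩
      simp only [Set.mem_inter_iff, Set.mem_Iic, Set.mem_Ioo, not_and] at ht3
      have h4 := ht3 ht2
      have h5 : ¬ t < 1 := fun hlt => h4 ht1 hlt
      have : t = y := le_antisymm ht2 (le_trans hy1 (not_lt.mp h5))
      exact this
  rw [MeasureTheory.setIntegral_congr_set hae, intervalIntegral.integral_of_le hy0]

lemma beta_binCDF (n s : ℕ) (hs : s + 1 ≤ n) {y : ℝ} (hy0 : 0 ≤ y) (hy1 : y ≤ 1) :
    betaCDF (s + 1) (n - s) y = 1 - binCDF n y (s : ℤ) := by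
  have hcont : Continuous (fun t : ℝ => Cns n s * t ^ s * (1 - t) ^ (n - 1 - s)) := by fun_prop
  set h : ℝ → ℝ := fun t => Cns n s * t ^ s * (1 - t) ^ (n - 1 - s) with hh
  set F : ℝ → ℝ := fun u => ∫ t in (0:ℝ)..u, h t with hF
  set Φ : ℝ → ℝ := fun u => 1 - ∑ k ∈ Finset.range (s+1), (n.choose k : ℝ) * u^k * (1-u)^(n-k)
    with hΦdef
  have hFd : ∀ t : ℝ, HasDerivAt F (h t) t := fun t =>
    intervalIntegral.integral_hasDerivAt_right (hcont.intervalIntegrable 0 t)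
      (hcont.stronglyMeasurableAtFilter _ _) hcont.continuousAt
  have hΦd : ∀ t : ℝ, HasDerivAt Φ (h t) t := by
    intro t
    set T : ℕ → ℝ := fun k => (k : ℝ) * (n.choose k : ℝ) * t^(k-1) * (1-t)^(n-k) with hT
    have hterm : ∀ k ∈ Finset.range (s+1),
        HasDerivAt (fun u : ℝ => (n.choose k : ℝ) * u^k * (1-u)^(n-k)) (T k - T (k+1)) t := by
      intro k hk
      have hkn : k + 1 ≤ n := le_trans (by simpa using Nat.lt_succ_iff.mp (Finset.mem_range.mp hk)) hs
      have h1 : HasDerivAt (fun x : ℝ => x^k) ((k:ℝ) * t^(k-1)) t := hasDerivAt_pow k t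
      have h2 : HasDerivAt (fun u : ℝ => (1-u)^(n-k))
          (((n-k : ℕ):ℝ) * (1-t)^(n-k-1) * (-1)) t := by
        exact ((hasDerivAt_id t).const_sub 1).pow (n-k)
      have h3 := (h1.mul h2).const_mul ((n.choose k : ℝ))
      have heq : (n.choose k : ℝ) * ((k:ℝ) * t^(k-1) * (1-t)^(n-k)
          + t^k * (((n-k:ℕ):ℝ) * (1-t)^(n-k-1) * (-1))) = T k - T (k+1) := by
        have hcc : ((n.choose (k+1) : ℕ):ℝ) * ((k+1 : ℕ):ℝ)
            = ((n.choose k : ℕ):ℝ) * ((n - k : ℕ):ℝ) := by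
          exact_mod_cast congrArg (Nat.cast (R := ℝ)) (Nat.choose_succ_right_eq n k)
        push_cast at hcc
        simp only [hT]
        rw [show n - (k+1) = n - k - 1 from by omega]
        push_cast [Nat.add_sub_cancel]
        linear_combination (t^k * (1-t)^(n-k-1)) * hcc
      have h4 : (fun u : ℝ => (n.choose k : ℝ) * (u^k * (1-u)^(n-k)))
          = (fun u : ℝ => (n.choose k : ℝ) * u^k * (1-u)^(n-k)) := by
        funext u; ring
      rw [← heq, ← h4]
      exact h3
    have hsum := HasDerivAt.fun_sum hterm
    have htel : ∑ k ∈ Finset.range (s+1), (T k - T (k+1)) = T 0 - T (s+1) :=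
      Finset.sum_range_sub' T (s+1)
    have hT0 : T 0 = 0 := by simp [hT]
    have hTs : T (s+1) = h t := by
      have hfac := Nat.choose_mul_factorial_mul_factorial hs
      have hcast : ((n.choose (s+1) : ℕ):ℝ) * ((s+1).factorial : ℝ) * (((n - (s+1)).factorial : ℕ):ℝ)
          = (n.factorial : ℝ) := by exact_mod_cast congrArg (Nat.cast (R := ℝ)) hfac
      have hC : ((s+1 : ℕ):ℝ) * (n.choose (s+1) : ℝ) = Cns n s := by
        unfold Cns
        rw [show n - (s+1) = n - 1 - s from by omega] at hcast
        rw [Nat.factorial_succ] at hcast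
        push_cast at hcast ⊢
        have hs0 : (s.factorial : ℝ) ≠ 0 := by positivity
        have hns0 : (((n-1-s).factorial : ℕ) : ℝ) ≠ 0 := by positivity
        field_simp
        linear_combination hcast
      simp only [hT, hh]
      rw [Nat.add_sub_cancel, show n - (s+1) = n - 1 - s from by omega]
      push_cast at hC ⊢
      linear_combination (t^s * (1-t)^(n-1-s)) * hC
    rw [htel] at hsum
    have hΦ2 : HasDerivAt Φ (-(T 0 - T (s+1))) t := HasDerivAt.const_sub 1 hsum
    have heq2 : -(T 0 - T (s+1)) = h t := by rw [hT0, hTs]; ring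
    rwa [heq2] at hΦ2
  have hd : ∀ u : ℝ, HasDerivAt (fun v => F v - Φ v) 0 u := by
    intro u; have := (hFd u).sub (hΦd u); rwa [sub_self] at this
  have hconst := is_const_of_deriv_eq_zero (𝕜 := ℝ)
    (fun u => (hd u).differentiableAt) (fun u => (hd u).deriv) y 0
  have hF0 : F 0 = 0 := intervalIntegral.integral_same
  have hΦ0 : Φ 0 = 0 := by
    simp only [hΦdef]
    rw [Finset.sum_eq_single 0]
    · norm_num
    · intro k _ hk0
      simp [zero_pow hk0]
    · intro habs; simp at habs
  have hFΦ : F y = Φ y := by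
    have := hconst
    have : F y - Φ y = F 0 - Φ 0 := this
    rw [hF0, hΦ0] at this
    linarith
  rw [betaCDF_eq n s hs hy0 hy1, binCDF_natCast]
  rw [show (∫ t in (0:ℝ)..y, Cns n s * t ^ s * (1 - t) ^ (n - 1 - s)) = F y from rfl, hFΦ]
  simp only [hΦdef]
  unfold binPMF
  rfl

lemma pairing_nat (n k0 : ℕ) (hk0 : 1 ≤ k0) (h2k : 2 * k0 ≤ n) :
    ∀ i, i + 1 ≤ k0 →
      n.choose (k0 - 1 - i) * (n - k0) ^ (2 * i + 1) ≤ n.choose (k0 + i) * k0 ^ (2 * i + 1) := by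
  intro i
  induction i with
  | zero =>
    intro _
    have h := Nat.choose_succ_right_eq n (k0 - 1)
    rw [show k0 - 1 + 1 = k0 from by omega] at h
    rw [show n - (k0 - 1) = (n - k0) + 1 from by omega] at h
    have : n.choose (k0 - 1) * (n - k0) ≤ n.choose k0 * k0 :=
      calc n.choose (k0 - 1) * (n - k0) ≤ n.choose (k0 - 1) * ((n - k0) + 1) :=
            Nat.mul_le_mul_left _ (by omega)
        _ = n.choose k0 * k0 := h.symm
    simpa using this
  | succ i ih =>
    intro hi1
    have hi2 : i + 2 ≤ k0 := by omega
    have ihh := ih (by omega)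
    set M := n - k0 with hM
    have hMk : k0 ≤ M := by omega
    -- identities
    have hr := Nat.choose_succ_right_eq n (k0 + i)
    rw [show n - (k0 + i) = M - i from by omega] at hr
    have hl := Nat.choose_succ_right_eq n (k0 - 2 - i)
    rw [show k0 - 2 - i + 1 = k0 - 1 - i from by omega,
        show n - (k0 - 2 - i) = M + i + 2 from by omega] at hl
    -- key numeric inequality
    have key : (k0 - 1 - i) * (k0 + i + 1) * M ^ 2 ≤ (M - i) * (M + i + 2) * k0 ^ 2 := by
      have hMk' : (k0:ℤ) ≤ (M:ℤ) := by exact_mod_cast hMk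
      have hk0' : (1:ℤ) ≤ (k0:ℤ) := by exact_mod_cast hk0
      have hi0 : (0:ℤ) ≤ (i:ℤ) := Int.natCast_nonneg i
      zify [show i ≤ k0 - 1 from by omega, show 1 ≤ k0 from hk0, show i ≤ M from by omega]
      have h1 : (0:ℤ) ≤ ((i:ℤ)+1)^2 * ((M:ℤ)^2 - (k0:ℤ)^2) := by
        apply mul_nonneg (sq_nonneg _)
        nlinarith [hMk', hk0', hi0]
      have h2 : (0:ℤ) ≤ 2*(M:ℤ)*(k0:ℤ)^2 := by positivity
      nlinarith [h1, h2]
    -- main chain, multiplied by D := (k0+i+1)*(M+i+2)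
    have hD : 0 < (k0 + i + 1) * (M + i + 2) := by positivity
    apply Nat.le_of_mul_le_mul_right _ hD
    have e1 : n.choose (k0 - 1 - (i+1)) * M ^ (2*(i+1)+1) * ((k0 + i + 1) * (M + i + 2))
        = (n.choose (k0 - 2 - i) * (M + i + 2)) * (M ^ (2*i+3) * (k0 + i + 1)) := by
      rw [show k0 - 1 - (i+1) = k0 - 2 - i from by omega]; ring_nf
    rw [e1, ← hl]
    have e2 : n.choose (k0 + (i+1)) * k0 ^ (2*(i+1)+1) * ((k0 + i + 1) * (M + i + 2))
        = (n.choose (k0 + i + 1) * (k0 + i + 1)) * (k0 ^ (2*i+3) * (M + i + 2)) := by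
      rw [show k0 + (i+1) = k0 + i + 1 from by omega]; ring_nf
    rw [e2, hr]
    calc n.choose (k0 - 1 - i) * (k0 - 1 - i) * (M ^ (2*i+3) * (k0 + i + 1))
        = (n.choose (k0 - 1 - i) * M ^ (2*i+1)) * ((k0 - 1 - i) * (k0 + i + 1) * M^2) := by ring_nf
      _ ≤ (n.choose (k0 + i) * k0 ^ (2*i+1)) * ((M - i) * (M + i + 2) * k0^2) :=
          Nat.mul_le_mul ihh key
      _ = n.choose (k0 + i) * (M - i) * (k0 ^ (2*i+3) * (M + i + 2)) := by ring_nf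

lemma binPMF_symm (n k : ℕ) (hk : k ≤ n) (p : ℝ) : binPMF n (1-p) k = binPMF n p (n-k) := by
  unfold binPMF
  rw [show n - (n-k) = k from by omega, Nat.choose_symm hk, sub_sub_cancel]
  ring

lemma binCDF_compl (n s : ℕ) (hs : s + 1 ≤ n) (p : ℝ) :
    binCDF n p (s:ℤ) + binCDF n (1-p) ((n - s - 1 : ℕ):ℤ) = 1 := by
  rw [binCDF_natCast, binCDF_natCast, show (n - s - 1) + 1 = n - s from by omega]
  have hre : ∑ k ∈ Finset.range (n-s), binPMF n (1-p) k
      = ∑ k ∈ Finset.Ico (s+1) (n+1), binPMF n p k := by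
    apply Finset.sum_nbij' (fun k => n - k) (fun k => n - k)
    · intro a ha
      simp only [Finset.mem_range] at ha
      simp only [Finset.mem_Ico]
      omega
    · intro a ha
      simp only [Finset.mem_Ico] at ha
      simp only [Finset.mem_range]
      omega
    · intro a ha; simp only [Finset.mem_range] at ha; omega
    · intro a ha; simp only [Finset.mem_Ico] at ha; omega
    · intro a ha
      simp only [Finset.mem_range] at ha
      exact binPMF_symm n a (by omega) p
  rw [hre, Finset.sum_range_add_sum_Ico _ (by omega : s+1 ≤ n+1), sum_binPMF]

lemma face1 (n s : ℕ) (hs1 : s + 1 ≤ n) (hn2 : n ≤ 2 * s) :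
    1/2 ≤ binCDF n ((s:ℝ)/n) (s:ℤ) := by
  have hs0 : 1 ≤ s := by omega
  have hn0 : 0 < n := by omega
  have hnR : (0:ℝ) < n := by exact_mod_cast hn0
  set p : ℝ := (s:ℝ)/n with hp
  have hp0 : 0 ≤ p := by positivity
  have hp1 : p ≤ 1 := by
    rw [hp, div_le_one hnR]; exact_mod_cast Nat.le_of_lt_succ (by omega)
  -- express pmf with nat numerators
  have hf : ∀ k, k ≤ n → binPMF n p k = ((n.choose k * s^k * (n-s)^(n-k) : ℕ) : ℝ) / (n:ℝ)^n := by
    intro k hk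
    unfold binPMF
    have h1 : (1:ℝ) - p = ((n-s:ℕ):ℝ)/n := by
      rw [hp, Nat.cast_sub (by omega)]; field_simp
    rw [h1, hp, div_pow, div_pow]
    push_cast
    have hn' : (n:ℝ)^n = (n:ℝ)^k * (n:ℝ)^(n-k) := by
      rw [← pow_add, show k + (n-k) = n from by omega]
    rw [hn']
    field_simp
  -- pointwise pairing inequality
  have hpair : ∀ i ∈ Finset.range (n-s), binPMF n p (s+1+i) ≤ binPMF n p (s-i) := by
    intro i hi
    have hiR : i < n - s := Finset.mem_range.mp hi
    have his : i ≤ s := by omega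
    have hnat : n.choose (s+1+i) * s^(s+1+i) * (n-s)^(n-(s+1+i))
        ≤ n.choose (s-i) * s^(s-i) * (n-s)^(n-(s-i)) := by
      have hpn := pairing_nat n (n-s) (by omega) (by omega) i (by omega)
      rw [show n - (n-s) = s from by omega] at hpn
      rw [show (n-s) - 1 - i = n - (s+1+i) from by omega] at hpn
      rw [show (n-s) + i = n - (s-i) from by omega] at hpn
      rw [Nat.choose_symm (by omega), Nat.choose_symm (by omega)] at hpn
      have hmul := Nat.mul_le_mul_right (s^(s-i) * (n-s)^(n-s-1-i)) hpn
      calc n.choose (s+1+i) * s^(s+1+i) * (n-s)^(n-(s+1+i))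
          = n.choose (s+1+i) * s^(2*i+1) * (s^(s-i) * (n-s)^(n-s-1-i)) := by
            rw [show n-(s+1+i) = n-s-1-i from by omega, show s+1+i = (2*i+1) + (s-i) from by omega,
                pow_add]
            ring
        _ ≤ n.choose (s-i) * (n-s)^(2*i+1) * (s^(s-i) * (n-s)^(n-s-1-i)) := hmul
        _ = n.choose (s-i) * s^(s-i) * (n-s)^(n-(s-i)) := by
            rw [show n-(s-i) = (2*i+1) + (n-s-1-i) from by omega, pow_add]
            ring
    rw [hf (s+1+i) (by omega), hf (s-i) (by omega)]
    gcongr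
  have htot : ∑ k ∈ Finset.range (s+1), binPMF n p k
      + ∑ k ∈ Finset.Ico (s+1) (n+1), binPMF n p k = 1 := by
    rw [Finset.sum_range_add_sum_Ico _ (by omega : s+1 ≤ n+1), sum_binPMF]
  have hIco : ∑ k ∈ Finset.Ico (s+1) (n+1), binPMF n p k
      ≤ ∑ k ∈ Finset.range (s+1), binPMF n p k := by
    rw [Finset.sum_Ico_eq_sum_range, show n + 1 - (s+1) = n - s from by omega]
    calc ∑ i ∈ Finset.range (n-s), binPMF n p (s+1+i)
        ≤ ∑ i ∈ Finset.range (n-s), binPMF n p (s-i) := Finset.sum_le_sum hpair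
      _ = ∑ k ∈ (Finset.range (n-s)).image (fun i => s - i), binPMF n p k := by
          rw [Finset.sum_image]
          intro x hx y hy hxy
          simp only [Finset.coe_range, Set.mem_Iio, Finset.mem_coe, Finset.mem_range] at hx hy hxy
          omega
      _ ≤ ∑ k ∈ Finset.range (s+1), binPMF n p k := by
          apply Finset.sum_le_sum_of_subset_of_nonneg
          · intro k hk
            simp only [Finset.mem_image, Finset.mem_range] at hk
            obtain ⟨i, hi, rfl⟩ := hk
            simp only [Finset.mem_range]; omega
          · intro k _ _; exact binPMF_nonneg_s10 hp0 hp1 n k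
  rw [binCDF_natCast]
  linarith

-- pointwise reflection inequality
lemma refl_pointwise {a b p u x : ℝ} (ha : 0 < a) (hb : 0 ≤ b) (hp0 : 0 < p)
    (hp2 : 2*p ≤ 1) (he : a*(1-p) = (b+1)*p) (hx0 : 0 ≤ x) (hxu : x ≤ u) (hup : u < p) :
    0 ≤ a*(1/(p+x)) + b*(-1/(1-p-x)) - (a*(-1/(p-x)) + b*(1/(1-p+x))) := by
  have hxp : x < p := lt_of_le_of_lt hxu hup
  have d1 : 0 < p + x := by linarith
  have d2 : 0 < 1 - p - x := by linarith
  have d3 : 0 < p - x := by linarith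
  have d4 : 0 < 1 - p + x := by linarith
  have hx2 : x^2 ≤ p^2 := by nlinarith
  have key : 0 ≤ a*p*((1-p)^2 - x^2) - b*(1-p)*(p^2 - x^2) := by
    rcases le_or_gt (a*p) (b*(1-p)) with hc | hc
    · have h3 : 0 ≤ x^2*(b*(1-p) - a*p) := mul_nonneg (sq_nonneg x) (by linarith)
      nlinarith [he, hp0, hp2]
    · have h1 : x^2*(a*p - b*(1-p)) ≤ p^2*(a*p - b*(1-p)) :=
        mul_le_mul_of_nonneg_right hx2 (by linarith)
      nlinarith [h1, mul_nonneg (mul_nonneg ha.le hp0.le) (by linarith : (0:ℝ) ≤ 1 - 2*p)]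
  have expand : a*(1/(p+x)) + b*(-1/(1-p-x)) - (a*(-1/(p-x)) + b*(1/(1-p+x)))
      = 2*(a*p*((1-p)^2 - x^2) - b*(1-p)*(p^2 - x^2)) / (((p+x)*(p-x))*((1-p-x)*(1-p+x))) := by
    field_simp
    ring
  rw [expand]
  positivity

lemma refl_fun (n s : ℕ) (hs0 : 1 ≤ s) (h2s : 2*s ≤ n) {u : ℝ}
    (hu0 : 0 ≤ u) (hup : u ≤ (s:ℝ)/n) :
    ((s:ℝ)/n - u)^s * (1 - ((s:ℝ)/n - u))^(n-1-s)
      ≤ ((s:ℝ)/n + u)^s * (1 - ((s:ℝ)/n + u))^(n-1-s) := by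
  have hn0 : 0 < n := by omega
  have hnR : (0:ℝ) < n := by exact_mod_cast hn0
  set p : ℝ := (s:ℝ)/n with hpdef
  have hp0 : 0 < p := by positivity
  have hp2 : 2*p ≤ 1 := by
    rw [hpdef, show (2:ℝ)*((s:ℝ)/n) = (2*(s:ℝ))/n from by ring, div_le_one hnR]
    exact_mod_cast h2s
  set a : ℝ := (s:ℝ) with hadef
  set b : ℝ := ((n-1-s:ℕ):ℝ) with hbdef
  have ha : 0 < a := by rw [hadef]; exact_mod_cast hs0
  have hb : 0 ≤ b := by positivity
  have he : a*(1-p) = (b+1)*p := by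
    rw [hadef, hbdef, hpdef]
    rw [Nat.cast_sub (by omega : s ≤ n - 1), Nat.cast_sub (by omega : 1 ≤ n)]
    field_simp
    ring
  rcases eq_or_lt_of_le hup with heq | hlt
  · -- u = p
    rw [← heq] at *
    rw [sub_self, zero_pow (by omega : s ≠ 0), zero_mul]
    have h1 : (0:ℝ) ≤ u + u := by linarith
    have h2 : (0:ℝ) ≤ 1 - (u + u) := by linarith
    exact mul_nonneg (pow_nonneg h1 s) (pow_nonneg h2 _)
  · -- u < p
    set H : ℝ → ℝ := fun x => a*Real.log (p+x) + b*Real.log (1-p-x)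
      - (a*Real.log (p-x) + b*Real.log (1-p+x)) with hHdef
    have hH : ∀ x, 0 ≤ x → x ≤ u → HasDerivAt H
        (a*(1/(p+x)) + b*(-1/(1-p-x)) - (a*(-1/(p-x)) + b*(1/(1-p+x)))) x := by
      intro x hx0 hxu
      have d1 : 0 < p + x := by linarith
      have d2 : 0 < 1 - p - x := by linarith
      have d3 : 0 < p - x := by linarith
      have d4 : 0 < 1 - p + x := by linarith
      have hd1 : HasDerivAt (fun x : ℝ => Real.log (p+x)) (1/(p+x)) x := by
        have := (((hasDerivAt_id x).const_add p)).log (by linarith : p + x ≠ 0)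
        simpa using this
      have hd2 : HasDerivAt (fun x : ℝ => Real.log (1-p-x)) (-1/(1-p-x)) x := by
        have := (((hasDerivAt_id x).const_sub (1-p))).log (by linarith : 1 - p - x ≠ 0)
        simpa using this
      have hd3 : HasDerivAt (fun x : ℝ => Real.log (p-x)) (-1/(p-x)) x := by
        have := (((hasDerivAt_id x).const_sub p)).log (by linarith : p - x ≠ 0)
        simpa using this
      have hd4 : HasDerivAt (fun x : ℝ => Real.log (1-p+x)) (1/(1-p+x)) x := by
        have := (((hasDerivAt_id x).const_add (1-p))).log (by linarith : 1 - p + x ≠ 0)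
        simpa using this
      exact ((hd1.const_mul a).add (hd2.const_mul b)).sub
        ((hd3.const_mul a).add (hd4.const_mul b))
    have hmono : MonotoneOn H (Set.Icc 0 u) := by
      apply monotoneOn_of_deriv_nonneg (convex_Icc 0 u)
      · intro x hx
        exact (hH x hx.1 hx.2).continuousAt.continuousWithinAt
      · intro x hx
        rw [interior_Icc] at hx
        exact (hH x hx.1.le hx.2.le).differentiableAt.differentiableWithinAt
      · intro x hx
        rw [interior_Icc] at hx
        rw [(hH x hx.1.le hx.2.le).deriv]
        exact refl_pointwise ha hb hp0 hp2 he hx.1.le hx.2.le hlt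
    have hH0 : H 0 = 0 := by
      rw [hHdef]
      simp only [add_zero, sub_zero]
      ring
    have hHu : 0 ≤ H u := by
      rw [← hH0]
      exact hmono (Set.mem_Icc.mpr ⟨le_rfl, hu0⟩) (Set.mem_Icc.mpr ⟨hu0, le_rfl⟩) hu0
    have d1 : 0 < p + u := by linarith
    have d2 : 0 < 1 - p - u := by linarith
    have d3 : 0 < p - u := by linarith
    have d4 : 0 < 1 - p + u := by linarith
    have hexp : ∀ X Y : ℝ, 0 < X → 0 < Y →
        X^s * Y^(n-1-s) = Real.exp (a*Real.log X + b*Real.log Y) := by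
      intro X Y hX hY
      rw [Real.exp_add, hadef, hbdef, Real.exp_nat_mul, Real.exp_nat_mul,
        Real.exp_log hX, Real.exp_log hY]
    rw [show 1 - (p - u) = 1 - p + u from by ring, show 1 - (p + u) = 1 - p - u from by ring,
        hexp _ _ d3 d4, hexp _ _ d1 d2]
    apply Real.exp_le_exp.mpr
    have := hHu
    rw [hHdef] at this
    simp only at this
    linarith

lemma face2 (n s : ℕ) (hs0 : 1 ≤ s) (h2s : 2*s ≤ n) :
    1/2 ≤ binCDF n ((s:ℝ)/n) (s:ℤ) := by
  have hs1 : s + 1 ≤ n := by omega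
  have hn0 : 0 < n := by omega
  have hnR : (0:ℝ) < n := by exact_mod_cast hn0
  set p : ℝ := (s:ℝ)/n with hpdef
  have hp0 : 0 < p := by positivity
  have hp1 : p ≤ 1 := by
    rw [hpdef, div_le_one hnR]; exact_mod_cast by omega
  have hp2 : 2*p ≤ 1 := by
    rw [hpdef, show (2:ℝ)*((s:ℝ)/n) = (2*(s:ℝ))/n from by ring, div_le_one hnR]
    exact_mod_cast h2s
  set g : ℝ → ℝ := fun t => Cns n s * t^s * (1-t)^(n-1-s) with hg
  have hgc : Continuous g := by rw [hg]; fun_prop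
  have h1 : 1 - binCDF n p (s:ℤ) = ∫ t in (0:ℝ)..p, g t := by
    rw [← beta_binCDF n s hs1 hp0.le hp1, betaCDF_eq n s hs1 hp0.le hp1]
  have h2 : binCDF n p (s:ℤ) = ∫ t in p..1, g t := by
    have hc := binCDF_compl n s hs1 p
    have hb := beta_binCDF n (n-s-1) (by omega : (n-s-1)+1 ≤ n) (y := 1-p) (by linarith) (by linarith)
    have he := betaCDF_eq n (n-s-1) (by omega : (n-s-1)+1 ≤ n) (y := 1-p) (by linarith) (by linarith)
    have hCns : Cns n (n-s-1) = Cns n s := by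
      unfold Cns
      rw [show n-1-(n-s-1) = s from by omega, show n-s-1 = n-1-s from by omega, mul_comm]
    have hbc : binCDF n p (s:ℤ) = ∫ t in (0:ℝ)..(1-p),
        Cns n s * t^(n-1-s) * (1-t)^s := by
      rw [show binCDF n p (s:ℤ) = 1 - binCDF n (1-p) ((n-s-1:ℕ):ℤ) from by linarith, ← hb, he,
          hCns]
      apply intervalIntegral.integral_congr
      intro x _
      rw [show n-1-(n-s-1) = s from by omega, show n-s-1 = n-1-s from by omega]
    rw [hbc]
    have hcs := intervalIntegral.integral_comp_sub_left g 1 (a := 0) (b := 1-p)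
    rw [show (1:ℝ)-(1-p) = p from by ring, show (1:ℝ)-0 = 1 from by ring] at hcs
    rw [← hcs]
    apply intervalIntegral.integral_congr
    intro x _
    simp only [hg]
    rw [show (1:ℝ)-(1-x) = x from by ring]
    ring
  have hC := (Cns_pos n s).le
  have hrefl : ∫ t in (0:ℝ)..p, g t ≤ ∫ t in p..(2*p), g t := by
    have e1 : ∫ t in (0:ℝ)..p, g t = ∫ x in (0:ℝ)..p, g (p - x) := by
      rw [intervalIntegral.integral_comp_sub_left g p]
      norm_num
    have e2 : ∫ x in (0:ℝ)..p, g (p + x) = ∫ t in p..(2*p), g t := by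
      rw [intervalIntegral.integral_comp_add_left g p]
      norm_num [two_mul]
    rw [e1, ← e2]
    apply intervalIntegral.integral_mono_on hp0.le
    · exact (hgc.comp (by fun_prop : Continuous fun x : ℝ => p - x)).intervalIntegrable 0 p
    · exact (hgc.comp (by fun_prop : Continuous fun x : ℝ => p + x)).intervalIntegrable 0 p
    · intro x hx
      have h := refl_fun n s hs0 h2s hx.1 hx.2
      have h' := mul_le_mul_of_nonneg_left h hC
      simp only [hg]
      calc Cns n s * (p-x)^s * (1-(p-x))^(n-1-s)
          = Cns n s * ((p-x)^s * (1-(p-x))^(n-1-s)) := by ring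
        _ ≤ Cns n s * ((p+x)^s * (1-(p+x))^(n-1-s)) := h'
        _ = Cns n s * (p+x)^s * (1-(p+x))^(n-1-s) := by ring
  have htail : ∫ t in p..(2*p), g t ≤ ∫ t in p..1, g t := by
    have hadd := intervalIntegral.integral_add_adjacent_intervals
      (hgc.intervalIntegrable p (2*p) : IntervalIntegrable g MeasureTheory.volume p (2*p))
      (hgc.intervalIntegrable (2*p) 1 : IntervalIntegrable g MeasureTheory.volume (2*p) 1)
    have hnn : 0 ≤ ∫ t in (2*p)..1, g t := by
      apply intervalIntegral.integral_nonneg hp2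
      intro t ht
      have ht1 : 0 ≤ t := le_trans (by linarith) ht.1
      have ht2 : 0 ≤ 1 - t := by linarith [ht.2]
      simp only [hg]
      positivity
    linarith
  linarith

lemma binCDF_anti (n s : ℕ) (hs : s + 1 ≤ n) {p p' : ℝ} (h0 : 0 ≤ p) (h : p ≤ p') (h1 : p' ≤ 1) :
    binCDF n p' (s:ℤ) ≤ binCDF n p (s:ℤ) := by
  have e1 := beta_binCDF n s hs (le_trans h0 h) h1
  have e2 := beta_binCDF n s hs h0 (le_trans h h1)
  have := betaCDF_mono (s+1) (n-s) h
  linarith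

lemma median_ge_half (n s : ℕ) {p : ℝ} (hp0 : 0 < p) (hp1 : p < 1) (hsn : s ≤ n)
    (hnp : (n:ℝ)*p ≤ s) : 1/2 ≤ binCDF n p (s:ℤ) := by
  rcases eq_or_lt_of_le hsn with rfl | hlt
  · rw [binCDF_natCast, sum_binPMF]
    norm_num
  · have hs1 : s + 1 ≤ n := hlt
    have hn0 : 0 < n := by omega
    have hnR : (0:ℝ) < n := by exact_mod_cast hn0
    have hs0 : 1 ≤ s := by
      rcases Nat.eq_zero_or_pos s with rfl | h
      · exfalso
        have : (n:ℝ)*p > 0 := by positivity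
        simp only [Nat.cast_zero] at hnp
        linarith
      · exact h
    have hple : p ≤ (s:ℝ)/n := by
      rw [le_div_iff₀ hnR]
      linarith [hnp]
    have hd1 : (0:ℝ) ≤ (s:ℝ)/n := by positivity
    have hd2 : (s:ℝ)/n ≤ 1 := by
      rw [div_le_one hnR]; exact_mod_cast le_of_lt hlt
    have hanti := binCDF_anti n s hs1 hp0.le hple hd2
    rcases le_total n (2*s) with hc | hc
    · exact le_trans (face1 n s hs1 hc) hanti
    · exact le_trans (face2 n s hs0 hc) hanti

lemma binPMF_pos {p : ℝ} (h0 : 0 < p) (h1 : p < 1) {n s : ℕ} (hs : s ≤ n) :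
    0 < binPMF n p s := by
  unfold binPMF
  have hc : 0 < (n.choose s : ℝ) := by exact_mod_cast Nat.choose_pos hs
  have h2 : (0:ℝ) < 1 - p := by linarith
  positivity

lemma binCDF_ge_pmf {p : ℝ} (h0 : 0 ≤ p) (h1 : p ≤ 1) (n s : ℕ) :
    binPMF n p s ≤ binCDF n p (s:ℤ) := by
  rw [binCDF_natCast]
  exact Finset.single_le_sum (fun k _ => binPMF_nonneg_s10 h0 h1 n k) (Finset.self_mem_range_succ s)

lemma binCDF_pos {p : ℝ} (h0 : 0 < p) (h1 : p < 1) {n s : ℕ} (hs : s ≤ n) :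
    0 < binCDF n p (s:ℤ) := by
  exact lt_of_lt_of_le (binPMF_pos h0 h1 hs) (binCDF_ge_pmf h0.le h1.le n s)

lemma binCDF_le_one {p : ℝ} (h0 : 0 ≤ p) (h1 : p ≤ 1) {n s : ℕ} (hs : s ≤ n) :
    binCDF n p (s:ℤ) ≤ 1 := by
  rw [binCDF_natCast, ← sum_binPMF n p]
  apply Finset.sum_le_sum_of_subset_of_nonneg
  · exact Finset.range_subset_range.mpr (by omega)
  · intro k _ _; exact binPMF_nonneg_s10 h0 h1 n k

lemma binPMF_le_one {p : ℝ} (h0 : 0 ≤ p) (h1 : p ≤ 1) {n s : ℕ} (hs : s ≤ n) :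
    binPMF n p s ≤ 1 := by
  rw [← sum_binPMF n p]
  exact Finset.single_le_sum (fun k _ => binPMF_nonneg_s10 h0 h1 n k)
    (Finset.mem_range.mpr (by omega))

lemma pascal_cdf {p : ℝ} (h0 : 0 ≤ p) (h1 : p ≤ 1) {n s : ℕ} (hs : s ≤ n) :
    (1-p) * binCDF n p (s:ℤ) ≤ binCDF (n+1) p (s:ℤ) := by
  rw [binCDF_natCast, binCDF_natCast, Finset.mul_sum]
  apply Finset.sum_le_sum
  intro k hk
  have hkn : k ≤ n := by have := Finset.mem_range.mp hk; omega
  unfold binPMF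
  rw [show n + 1 - k = (n - k) + 1 from by omega, pow_succ]
  have hcle : (n.choose k : ℝ) ≤ ((n+1).choose k : ℝ) := by
    exact_mod_cast Nat.choose_le_choose k (by omega : n ≤ n+1)
  have h2 : (0:ℝ) ≤ 1 - p := by linarith
  calc (1-p) * ((n.choose k : ℝ) * p^k * (1-p)^(n-k))
      = (n.choose k : ℝ) * p^k * ((1-p)^(n-k) * (1-p)) := by ring
    _ ≤ ((n+1).choose k : ℝ) * p^k * ((1-p)^(n-k) * (1-p)) := by
        gcongr
    _ = ((n+1).choose k : ℝ) * p^k * ((1-p)^(n-k) * (1-p)) := rfl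

lemma betaCDF_nonneg (a b : ℕ) (y : ℝ) : 0 ≤ betaCDF a b y :=
  MeasureTheory.setIntegral_nonneg measurableSet_Iic (fun x _ => betaPDF_nonneg a b x)

lemma geomExpMin_le {j s : ℕ} (hs : s ≤ j) {y : ℝ} (hy0 : 0 < y) (hy1 : y < 1) (T : ℕ) :
    geomExpMin j s y T ≤ 1/(binCDF (j+1) y (s:ℤ)) - 1 := by
  have hid : betaCDF (s+1) (j-s+1) y = 1 - binCDF (j+1) y (s:ℤ) := by
    have h := beta_binCDF (j+1) s (by omega) hy0.le hy1.le
    rw [show (j+1) - s = j - s + 1 from by omega] at h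
    exact h
  set q := betaCDF (s+1) (j-s+1) y with hqdef
  set F := binCDF (j+1) y (s:ℤ) with hFdef
  have hFpos : 0 < F := binCDF_pos hy0 hy1 (by omega : s ≤ j+1)
  have hq0 : 0 ≤ q := betaCDF_nonneg _ _ _
  have hq1 : q < 1 := by rw [hid]; linarith
  have habs : ‖q‖ < 1 := by rw [Real.norm_eq_abs, abs_lt]; constructor <;> linarith
  have hsum2 : Summable (fun k : ℕ => (k:ℝ) * q^k) := by
    simpa [pow_one] using summable_pow_mul_geometric_of_norm_lt_one 1 habs
  have hsum3 : Summable (fun k : ℕ => (k:ℝ) * q^k * (1-q)) := hsum2.mul_right _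
  have hle : ∀ k : ℕ, (min k T : ℝ) * q^k * (1-q) ≤ (k:ℝ) * q^k * (1-q) := by
    intro k
    have h1 : (min k T : ℝ) ≤ (k:ℝ) := by
      have : min k T ≤ k := min_le_left k T
      exact_mod_cast this
    have h2 : (0:ℝ) ≤ q^k * (1-q) := mul_nonneg (pow_nonneg hq0 k) (by linarith)
    calc (min k T : ℝ) * q^k * (1-q) = (min k T : ℝ) * (q^k * (1-q)) := by ring
      _ ≤ (k:ℝ) * (q^k * (1-q)) := mul_le_mul_of_nonneg_right h1 h2
      _ = (k:ℝ) * q^k * (1-q) := by ring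
  have hnn : ∀ k : ℕ, 0 ≤ (min k T : ℝ) * q^k * (1-q) := by
    intro k
    have : (0:ℝ) ≤ (min k T : ℝ) := by positivity
    have h2 : (0:ℝ) ≤ q^k * (1-q) := mul_nonneg (pow_nonneg hq0 k) (by linarith)
    calc (0:ℝ) ≤ (min k T : ℝ) * (q^k * (1-q)) := mul_nonneg this h2
      _ = _ := by ring
  have hsum1 : Summable (fun k : ℕ => (min k T : ℝ) * q^k * (1-q)) :=
    Summable.of_nonneg_of_le hnn hle hsum3
  unfold geomExpMin
  rw [← hqdef]
  calc (∑' k : ℕ, (min k T : ℝ) * q^k * (1-q)) ≤ ∑' k : ℕ, (k:ℝ) * q^k * (1-q) :=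
        Summable.tsum_le_tsum hle hsum1 hsum3
    _ = (∑' k : ℕ, (k:ℝ) * q^k) * (1-q) := tsum_mul_right
    _ = q/(1-q)^2 * (1-q) := by rw [tsum_coe_mul_geometric_of_norm_lt_one habs]
    _ = 1/F - 1 := by
        rw [show (1:ℝ) - q = F from by rw [hid]; ring]
        field_simp
        rw [hid]


set_option maxHeartbeats 1000000 in
/-- for `0 < y < μ₁ ≤ 1`, `Δ' = μ₁ − y`, `R = μ₁(1−y)/(y(1−μ₁))`,
`D` the KL divergence between `Bernoulli(y)` and `Bernoulli(μ₁)`, and any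
nonnegative integer `j < (y/D) ln R`, taking `s(j) ~ Binomial(j, μ₁)`,
`E[ E[min{X(j,s(j),y), T} | s(j)] ] ≤ 1 + 2/(1−y) + (μ₁/Δ') e^{−Dj}`. -/
theorem small_j_bound (y μ₁ Δ' R D : ℝ) (hy : 0 < y) (hyμ : y < μ₁) (hμ : μ₁ ≤ 1)
    (hΔ : Δ' = μ₁ - y) (hR : R = μ₁ * (1 - y) / (y * (1 - μ₁)))
    (hD : D = y * Real.log (y / μ₁) + (1 - y) * Real.log ((1 - y) / (1 - μ₁)))
    (T : ℕ) (hT : 1 ≤ T) (j : ℕ) (hj : (j : ℝ) < (y / D) * Real.log R) :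
    ∑ s ∈ Finset.range (j + 1), binPMF j μ₁ s * geomExpMin j s y T ≤
      1 + 2 / (1 - y) + (μ₁ / Δ') * Real.exp (-D * j) := by
  rcases eq_or_lt_of_le hμ with heq | hμ1
  · -- μ₁ = 1 : hypothesis hj is vacuous
    exfalso
    rw [heq] at hR
    simp only [sub_self, mul_zero, div_zero] at hR
    rw [hR, Real.log_zero, mul_zero] at hj
    exact absurd hj (not_lt.mpr (Nat.cast_nonneg j))
  · have hy1 : y < 1 := hyμ.trans hμ1
    have hμ0 : 0 < μ₁ := hy.trans hyμ
    have hΔ0 : 0 < Δ' := by rw [hΔ]; linarith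
    have h1y : (0:ℝ) < 1 - y := by linarith
    have h1μ : (0:ℝ) < 1 - μ₁ := by linarith
    set K : ℝ := (1-μ₁)/(1-y) with hK
    have hK0 : 0 < K := by positivity
    have hRpos : 0 < R := by rw [hR]; positivity
    have hR1 : 1 < R := by
      rw [hR, lt_div_iff₀ (by positivity)]
      nlinarith
    -- step 1 : pointwise geometric bound
    have hstep1 : ∀ s ∈ Finset.range (j+1),
        binPMF j μ₁ s * geomExpMin j s y T ≤
          binPMF j μ₁ s / binCDF (j+1) y (s:ℤ) - binPMF j μ₁ s := by
      intro s hsm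
      have hsj : s ≤ j := by have := Finset.mem_range.mp hsm; omega
      have hg := geomExpMin_le hsj hy hy1 T
      have hf0 : 0 ≤ binPMF j μ₁ s := binPMF_nonneg_s10 hμ0.le hμ j s
      calc binPMF j μ₁ s * geomExpMin j s y T
          ≤ binPMF j μ₁ s * (1/binCDF (j+1) y (s:ℤ) - 1) := mul_le_mul_of_nonneg_left hg hf0
        _ = binPMF j μ₁ s * (1/binCDF (j+1) y (s:ℤ)) - binPMF j μ₁ s := by ring
        _ = binPMF j μ₁ s / binCDF (j+1) y (s:ℤ) - binPMF j μ₁ s := by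
            rw [mul_one_div]
    have hsum_f : ∑ s ∈ Finset.range (j+1), binPMF j μ₁ s = 1 := sum_binPMF j μ₁
    -- step 3 : the main sum bound
    have hmain : ∑ s ∈ Finset.range (j+1), binPMF j μ₁ s / binCDF (j+1) y (s:ℤ)
        ≤ 2 + 2/(1-y) + (μ₁/Δ') * Real.exp (-D*j) := by
      set m0 := Nat.floor (y * (j:ℝ)) with hm0def
      have hyj0 : (0:ℝ) ≤ y * (j:ℝ) := by positivity
      have hm0le : (m0:ℝ) ≤ y * j := Nat.floor_le hyj0
      have hm0gt : y * j < (m0:ℝ) + 1 := Nat.lt_floor_add_one _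
      have hm0j : m0 ≤ j := by
        have h1 : (m0:ℝ) ≤ (j:ℝ) := le_trans hm0le (by nlinarith [Nat.cast_nonneg (α := ℝ) j])
        exact_mod_cast h1
      rw [← Finset.sum_range_add_sum_Ico _ (show m0+1 ≤ j+1 from by omega)]
      -- Chernoff region
      have hA : ∑ s ∈ Finset.range (m0+1), binPMF j μ₁ s / binCDF (j+1) y (s:ℤ)
          ≤ (μ₁/Δ') * Real.exp (-D*j) := by
        have hterm : ∀ s ∈ Finset.range (m0+1),
            binPMF j μ₁ s / binCDF (j+1) y (s:ℤ) ≤ (1/(1-y)) * K^j * R^s := by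
          intro s hsm
          have hsm0 : s ≤ m0 := by have := Finset.mem_range.mp hsm; omega
          have hsj : s ≤ j := le_trans hsm0 hm0j
          have hpm : 0 < binPMF (j+1) y s := binPMF_pos hy hy1 (by omega)
          have hFc : binPMF (j+1) y s ≤ binCDF (j+1) y (s:ℤ) := binCDF_ge_pmf hy.le hy1.le _ _
          have hf0 : 0 ≤ binPMF j μ₁ s := binPMF_nonneg_s10 hμ0.le hμ j s
          have h1 : binPMF j μ₁ s / binCDF (j+1) y (s:ℤ) ≤ binPMF j μ₁ s / binPMF (j+1) y s :=
            div_le_div_of_nonneg_left hf0 hpm hFc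
          have h2 : binPMF j μ₁ s / binPMF (j+1) y s ≤ (1/(1-y)) * K^j * R^s := by
            rw [div_le_iff₀ hpm]
            have hbase : K * R * y = μ₁ := by
              rw [hK, hR]; field_simp
            have hKsplit : K^j = K^(j-s) * K^s := by
              rw [← pow_add, Nat.sub_add_cancel hsj]
            have hKy : K^(j-s) * (1-y)^(j-s) = (1-μ₁)^(j-s) := by
              rw [hK, div_pow, div_mul_cancel₀]
              exact pow_ne_zero _ (ne_of_gt h1y)
            have heq2 : (1/(1-y)) * K^j * R^s * binPMF (j+1) y s
                = ((j+1).choose s : ℝ) * μ₁^s * (1-μ₁)^(j-s) := by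
              unfold binPMF
              have e3 : (1/(1-y)) * K^j * R^s * (((j+1).choose s:ℝ) * y^s * (1-y)^((j+1)-s))
                  = ((j+1).choose s:ℝ) * (K*R*y)^s * (K^(j-s)*(1-y)^(j-s)) * ((1-y) * (1-y)⁻¹) := by
                rw [hKsplit, show (j+1)-s = (j-s)+1 from by omega, pow_succ, mul_pow, mul_pow,
                  one_div]
                ring
              rw [e3, mul_inv_cancel₀ (ne_of_gt h1y), mul_one, hbase, hKy]
            rw [heq2]
            unfold binPMF
            gcongr
            omega
          exact le_trans h1 h2
        calc ∑ s ∈ Finset.range (m0+1), binPMF j μ₁ s / binCDF (j+1) y (s:ℤ)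
            ≤ ∑ s ∈ Finset.range (m0+1), (1/(1-y)) * K^j * R^s := Finset.sum_le_sum hterm
          _ = (1/(1-y)) * K^j * ((R^(m0+1) - 1)/(R-1)) := by
              rw [← Finset.mul_sum, geom_sum_eq (ne_of_gt hR1)]
          _ ≤ (1/(1-y)) * K^j * (R^((y*j : ℝ)+1)/(R-1)) := by
              have hle : (R:ℝ)^(m0+1) - 1 ≤ R^((y*j : ℝ)+1) := by
                have e1 : (R:ℝ)^(m0+1) = R^(((m0+1 : ℕ)):ℝ) := (Real.rpow_natCast R (m0+1)).symm
                have e2 : R^(((m0+1 : ℕ)):ℝ) ≤ R^((y*j : ℝ)+1) := by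
                  apply Real.rpow_le_rpow_of_exponent_le hR1.le
                  push_cast
                  linarith
                nlinarith [e1, e2]
              have hd : (0:ℝ) < R - 1 := by linarith
              have hKj : (0:ℝ) ≤ (1/(1-y)) * K^j := by positivity
              apply mul_le_mul_of_nonneg_left _ hKj
              exact div_le_div₀ (by positivity) hle hd le_rfl
          _ = (μ₁/Δ') * Real.exp (-D*j) := by
              have hexpKR : K^j * R^(y*(j:ℝ)) = Real.exp (-D*j) := by
                have hlogK : Real.log K = Real.log (1-μ₁) - Real.log (1-y) := by
                  rw [hK, Real.log_div (ne_of_gt h1μ) (ne_of_gt h1y)]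
                have hlogR : Real.log R
                    = Real.log μ₁ + Real.log (1-y) - (Real.log y + Real.log (1-μ₁)) := by
                  rw [hR, Real.log_div (by positivity) (by positivity),
                    Real.log_mul (ne_of_gt hμ0) (ne_of_gt h1y),
                    Real.log_mul (ne_of_gt hy) (ne_of_gt h1μ)]
                have hDlog : D = y*(Real.log y - Real.log μ₁)
                    + (1-y)*(Real.log (1-y) - Real.log (1-μ₁)) := by
                  rw [hD, Real.log_div (ne_of_gt hy) (ne_of_gt hμ0),
                    Real.log_div (ne_of_gt h1y) (ne_of_gt h1μ)]
                have e1 : K^j = Real.exp ((j:ℝ) * Real.log K) := by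
                  rw [Real.exp_nat_mul, Real.exp_log hK0]
                have e2 : R^(y*(j:ℝ)) = Real.exp (Real.log R * (y*j)) :=
                  Real.rpow_def_of_pos hRpos _
                rw [e1, e2, ← Real.exp_add]
                congr 1
                rw [hlogK, hlogR, hDlog]
                ring
              have hμy : (0:ℝ) < μ₁ - y := by linarith
              have hfrac : (1/(1-y)) * (R/(R-1)) = μ₁/Δ' := by
                have hRm1 : R - 1 = (μ₁-y)/(y*(1-μ₁)) := by
                  rw [hR]; field_simp; ring
                rw [hΔ, hRm1, hR]
                field_simp
              calc (1/(1-y)) * K^j * (R^((y*(j:ℝ))+1)/(R-1))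
                  = (K^j * R^(y*(j:ℝ))) * ((1/(1-y)) * (R/(R-1))) := by
                    rw [Real.rpow_add hRpos, Real.rpow_one]
                    ring
                _ = Real.exp (-D*j) * (μ₁/Δ') := by rw [hexpKR, hfrac]
                _ = (μ₁/Δ') * Real.exp (-D*j) := by ring
      have hBC : ∑ s ∈ Finset.Ico (m0+1) (j+1), binPMF j μ₁ s / binCDF (j+1) y (s:ℤ)
          ≤ 2/(1-y) + 2 := by
        rcases eq_or_lt_of_le hm0j with heqj | hltj
        · rw [heqj, Finset.Ico_self, Finset.sum_empty]
          positivity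
        · rw [Finset.sum_eq_sum_Ico_succ_bot (by omega : m0+1 < j+1)]
          have hmj : m0+1 ≤ j := by omega
          have hmid : binPMF j μ₁ (m0+1) / binCDF (j+1) y ((m0+1 : ℕ):ℤ) ≤ 2/(1-y) := by
            have hmed := median_ge_half j (m0+1) hy hy1 hmj
              (by push_cast; linarith [hm0gt])
            have hpas := pascal_cdf hy.le hy1.le hmj (p := y)
            have hmul := mul_le_mul_of_nonneg_left hmed h1y.le
            have hF2 : (1-y)/2 ≤ binCDF (j+1) y ((m0+1:ℕ):ℤ) := by linarith
            have hf1 : binPMF j μ₁ (m0+1) ≤ 1 := binPMF_le_one hμ0.le hμ hmj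
            have hf0 : 0 ≤ binPMF j μ₁ (m0+1) := binPMF_nonneg_s10 hμ0.le hμ j (m0+1)
            calc binPMF j μ₁ (m0+1) / binCDF (j+1) y ((m0+1:ℕ):ℤ)
                ≤ 1 / ((1-y)/2) := div_le_div₀ zero_le_one hf1 (by positivity) hF2
              _ = 2/(1-y) := by rw [one_div_div]
          have hhigh : ∑ s ∈ Finset.Ico (m0+1+1) (j+1), binPMF j μ₁ s / binCDF (j+1) y (s:ℤ)
              ≤ 2 := by
            have hterm2 : ∀ s ∈ Finset.Ico (m0+1+1) (j+1),
                binPMF j μ₁ s / binCDF (j+1) y (s:ℤ) ≤ 2 * binPMF j μ₁ s := by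
              intro s hsm
              obtain ⟨hs1, hs2⟩ := Finset.mem_Ico.mp hsm
              have hsj : s ≤ j := by omega
              have hcast : ((m0:ℝ)+2) ≤ (s:ℝ) := by exact_mod_cast hs1
              have hmed := median_ge_half (j+1) s hy hy1 (by omega : s ≤ j+1)
                (by push_cast; nlinarith [hm0gt, hy1, hcast])
              have hf0 : 0 ≤ binPMF j μ₁ s := binPMF_nonneg_s10 hμ0.le hμ j s
              calc binPMF j μ₁ s / binCDF (j+1) y (s:ℤ)
                  ≤ binPMF j μ₁ s / (1/2) :=
                    div_le_div_of_nonneg_left hf0 (by norm_num) hmed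
                _ = 2 * binPMF j μ₁ s := by ring
            calc ∑ s ∈ Finset.Ico (m0+1+1) (j+1), binPMF j μ₁ s / binCDF (j+1) y (s:ℤ)
                ≤ ∑ s ∈ Finset.Ico (m0+1+1) (j+1), 2 * binPMF j μ₁ s :=
                  Finset.sum_le_sum hterm2
              _ = 2 * ∑ s ∈ Finset.Ico (m0+1+1) (j+1), binPMF j μ₁ s := by
                  rw [Finset.mul_sum]
              _ ≤ 2 * 1 := by
                  apply mul_le_mul_of_nonneg_left _ (by norm_num : (0:ℝ) ≤ 2)
                  rw [← hsum_f]
                  apply Finset.sum_le_sum_of_subset_of_nonneg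
                  · intro k hk
                    exact Finset.mem_range.mpr (Finset.mem_Ico.mp hk).2
                  · intro k _ _
                    exact binPMF_nonneg_s10 hμ0.le hμ j k
              _ = 2 := by norm_num
          linarith [hmid, hhigh]
      linarith [hA, hBC]
    calc ∑ s ∈ Finset.range (j + 1), binPMF j μ₁ s * geomExpMin j s y T
        ≤ ∑ s ∈ Finset.range (j+1),
            (binPMF j μ₁ s / binCDF (j+1) y (s:ℤ) - binPMF j μ₁ s) := Finset.sum_le_sum hstep1
      _ = ∑ s ∈ Finset.range (j+1), binPMF j μ₁ s / binCDF (j+1) y (s:ℤ) - 1 := by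
          rw [Finset.sum_sub_distrib, hsum_f]
      _ ≤ 1 + 2 / (1 - y) + (μ₁ / Δ') * Real.exp (-D * j) := by linarith [hmain]
end
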